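/- arXiv:2502.20783 — 9 statements merged into one kernel-verified Lean document; each statement's English description precedes it below -/
import Mathlib

section
/- Let g satisfy: continuously differentiable, strictly convex, g(0)=g'(0)=0, g'(w)→∞, and strictly log-concave (so g/g' is strictly increasing). Let w*(ν) be the unique maximizer of w - ν g(w), and let F(ν) := ν · g(α + max_{w≥0}(w - ν g(w))) for a fixed α > 0. Then the sign of F'(ν) equals the sign of α - g(w*(ν))/g'(w*(ν)); in particular F'(ν) = 0 iff g(w*(ν))/g'(w*(ν)) = α, F'(ν) > 0 iff g(w*(ν))/g'(w*(ν)) < α, and F'(ν) < 0 iff g(w*(ν))/g'(w*(ν)) > α. -/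
open Filter Set Topology


/-- Sign of the derivative of `F(ν) = ν · g(α + max_{w≥0}(w - ν g(w)))`:
it has the same sign as `α - g(w*(ν))/g'(w*(ν))`. -/
theorem stmt5 (g : ℝ → ℝ) (hg : ContDiff ℝ 1 g)
    (hsc : StrictConvexOn ℝ (Set.Ici (0 : ℝ)) g)
    (h0 : g 0 = 0) (h0' : deriv g 0 = 0)
    (hg'inf : Filter.Tendsto (deriv g) Filter.atTop Filter.atTop)
    (hlog : StrictMonoOn (fun w => g w / deriv g w) (Set.Ioi 0))
    (α : ℝ) (hα : 0 < α)
    (wstar : ℝ → ℝ)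
    (hmax : ∀ ν : ℝ, 0 < ν → 0 ≤ wstar ν ∧
      IsMaxOn (fun x => x - ν * g x) (Set.Ici 0) (wstar ν))
    (huniq : ∀ ν : ℝ, 0 < ν → ∀ w : ℝ, 0 ≤ w →
      IsMaxOn (fun x => x - ν * g x) (Set.Ici 0) w → w = wstar ν)
    (F : ℝ → ℝ)
    (hF : ∀ ν : ℝ, 0 < ν → F ν = ν * g (α + (wstar ν - ν * g (wstar ν)))) :
    ∀ ν : ℝ, 0 < ν →
      (deriv F ν = 0 ↔ g (wstar ν) / deriv g (wstar ν) = α) ∧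
      (0 < deriv F ν ↔ g (wstar ν) / deriv g (wstar ν) < α) ∧
      (deriv F ν < 0 ↔ α < g (wstar ν) / deriv g (wstar ν)) := by
  have hgd : Differentiable ℝ g := hg.differentiable one_ne_zero
  have hgc : Continuous g := hgd.continuous
  have hmono : StrictMonoOn (deriv g) (Set.Ici 0) :=
    hsc.strictMonoOn_deriv (fun x _ => hgd x)
  -- first order condition
  have foc : ∀ μ : ℝ, 0 < μ → 0 < wstar μ ∧ deriv g (wstar μ) = 1 / μ := by
    intro μ hμ
    obtain ⟨hw0, hmx⟩ := hmax μ hμ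
    have hder : ∀ x : ℝ, HasDerivAt (fun x => x - μ * g x) (1 - μ * deriv g x) x := fun x =>
      (hasDerivAt_id x).sub (((hgd x).hasDerivAt).const_mul μ)
    have hwpos : 0 < wstar μ := by
      rcases hw0.lt_or_eq with h | h
      · exact h
      · exfalso
        have h1 : HasDerivAt (fun x => x - μ * g x) 1 0 := by
          simpa [h0'] using hder 0
        have hs : Tendsto (slope (fun x => x - μ * g x) 0) (𝓝[>] 0) (𝓝 1) :=
          (hasDerivAt_iff_tendsto_slope.mp h1).mono_left
            (nhdsWithin_mono _ (fun x hx => ne_of_gt hx))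
        have hle : (1 : ℝ) ≤ 0 := by
          refine le_of_tendsto hs ?_
          filter_upwards [self_mem_nhdsWithin] with x hx
          have hfx : x - μ * g x ≤ (0 : ℝ) := by
            have := isMaxOn_iff.mp hmx x (Set.mem_Ici.mpr (le_of_lt hx))
            simpa [← h, h0] using this
          have hsl : slope (fun x => x - μ * g x) 0 x = (x - μ * g x) / x := by
            simp [slope, h0, div_eq_inv_mul]
          rw [hsl]
          exact div_nonpos_of_nonpos_of_nonneg hfx (le_of_lt hx)
        linarith
    refine ⟨hwpos, ?_⟩
    have hloc : IsLocalMax (fun x => x - μ * g x) (wstar μ) :=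
      hmx.isLocalMax (Ici_mem_nhds hwpos)
    have hz := hloc.hasDerivAt_eq_zero (hder (wstar μ))
    field_simp
    linarith
  intro ν hν
  obtain ⟨hw0, hmx⟩ := hmax ν hν
  obtain ⟨hwpos, hfoc⟩ := foc ν hν
  set w := wstar ν with hwdef
  have hg'wpos : 0 < deriv g w := hfoc ▸ one_div_pos.mpr hν
  -- continuity of wstar at ν
  have hcont : Tendsto wstar (𝓝 ν) (𝓝 w) := by
    rw [Metric.tendsto_nhds]
    intro ε hε
    set ε₁ := min ε w with hε₁def
    have hε₁ : 0 < ε₁ := lt_min hε hwpos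
    have hε₁w : ε₁ ≤ w := min_le_right ε w
    have hε₁ε : ε₁ ≤ ε := min_le_left ε w
    have ha0 : (0 : ℝ) < w - ε₁ / 2 := by linarith
    have hab : deriv g (w - ε₁ / 2) < 1 / ν := by
      rw [← hfoc]; exact hmono (le_of_lt ha0) (le_of_lt hwpos) (by linarith)
    have hb : 1 / ν < deriv g (w + ε₁ / 2) := by
      rw [← hfoc]; exact hmono (le_of_lt hwpos) (Set.mem_Ici.mpr (by linarith)) (by linarith)
    have hcont1 : ContinuousAt (fun μ : ℝ => 1 / μ) ν :=
      ContinuousAt.div continuousAt_const continuousAt_id (ne_of_gt hν)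
    have hev1 : ∀ᶠ μ in 𝓝 ν, (1 : ℝ) / μ ∈ Set.Ioo (deriv g (w - ε₁ / 2)) (deriv g (w + ε₁ / 2)) :=
      hcont1 (Ioo_mem_nhds hab hb)
    filter_upwards [hev1, eventually_gt_nhds hν] with μ hμIoo hμpos
    obtain ⟨hwμpos, hfocμ⟩ := foc μ hμpos
    have h1 : deriv g (w - ε₁ / 2) < deriv g (wstar μ) := by rw [hfocμ]; exact hμIoo.1
    have h2 : deriv g (wstar μ) < deriv g (w + ε₁ / 2) := by rw [hfocμ]; exact hμIoo.2
    have hlt1 : w - ε₁ / 2 < wstar μ :=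
      (hmono.lt_iff_lt (le_of_lt ha0) (le_of_lt hwμpos)).mp h1
    have hlt2 : wstar μ < w + ε₁ / 2 :=
      (hmono.lt_iff_lt (le_of_lt hwμpos) (Set.mem_Ici.mpr (by linarith))).mp h2
    rw [Real.dist_eq, abs_sub_lt_iff]
    constructor <;> linarith
  -- the value function V
  set V : ℝ → ℝ := fun μ => wstar μ - μ * g (wstar μ) with hVdef
  have hVd : HasDerivAt V (-(g w)) ν := by
    rw [hasDerivAt_iff_tendsto]
    have hBtend : Tendsto (fun μ => |g (wstar μ) - g w|) (𝓝 ν) (𝓝 0) := by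
      have : Tendsto (fun μ => g (wstar μ) - g w) (𝓝 ν) (𝓝 (g w - g w)) :=
        ((hgc.continuousAt.comp hcont).sub tendsto_const_nhds)
      simpa using this.abs
    refine squeeze_zero' ?_ ?_ hBtend
    · filter_upwards with μ; positivity
    · filter_upwards [eventually_gt_nhds hν] with μ hμpos
      rcases eq_or_ne μ ν with rfl | hne
      · simp
      obtain ⟨hwμ0, hmxμ⟩ := hmax μ hμpos
      obtain ⟨hwμpos, _⟩ := foc μ hμpos
      -- lower bound
      have hlow : V ν - (μ - ν) * g w ≤ V μ := by
        have := isMaxOn_iff.mp hmxμ w hw0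
        simp only [hVdef]
        nlinarith [this]
      have hup : V μ ≤ V ν - (μ - ν) * g (wstar μ) := by
        have := isMaxOn_iff.mp hmx (wstar μ) (le_of_lt hwμpos)
        simp only [hVdef]
        nlinarith [this]
      have hX0 : 0 ≤ V μ - V ν - (μ - ν) * (-(g w)) := by linarith
      have hXle : V μ - V ν - (μ - ν) * (-(g w)) ≤ |μ - ν| * |g (wstar μ) - g w| := by
        have h1 : V μ - V ν - (μ - ν) * (-(g w)) ≤ (μ - ν) * (g w - g (wstar μ)) := by
          linarith
        calc V μ - V ν - (μ - ν) * (-(g w)) ≤ (μ - ν) * (g w - g (wstar μ)) := h1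
          _ ≤ |(μ - ν) * (g w - g (wstar μ))| := le_abs_self _
          _ = |μ - ν| * |g (wstar μ) - g w| := by rw [abs_mul, abs_sub_comm (g w)]
      have hμν : 0 < |μ - ν| := abs_pos.mpr (sub_ne_zero.mpr hne)
      have : ‖V μ - V ν - (μ - ν) • (-(g w))‖ ≤ |μ - ν| * |g (wstar μ) - g w| := by
        rw [smul_eq_mul, Real.norm_eq_abs, abs_of_nonneg hX0]
        exact hXle
      calc ‖μ - ν‖⁻¹ * ‖V μ - V ν - (μ - ν) • (-(g w))‖
          ≤ ‖μ - ν‖⁻¹ * (|μ - ν| * |g (wstar μ) - g w|) := by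
            apply mul_le_mul_of_nonneg_left this (by positivity)
        _ = |g (wstar μ) - g w| := by
            rw [Real.norm_eq_abs]; field_simp
  -- derivative of F
  have hVν0 : 0 ≤ V ν := by
    have := isMaxOn_iff.mp hmx 0 Set.self_mem_Ici
    simp only [hVdef, h0] at this ⊢
    linarith
  set a := α + V ν with hadef
  have hapos : 0 < a := by simp only [hadef]; linarith
  have hg'apos : 0 < deriv g a := by
    have := hmono Set.self_mem_Ici (le_of_lt hapos) hapos
    rw [h0'] at this; exact this
  have hGd : HasDerivAt (fun μ => μ * g (α + V μ)) (g a - ν * (deriv g a * g w)) ν := by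
    have h2 : HasDerivAt (fun μ => g (α + V μ)) (deriv g a * (0 + -(g w))) ν := by
      have hin : HasDerivAt (fun μ => α + V μ) (0 + -(g w)) ν :=
        (hasDerivAt_const ν α).add hVd
      exact ((hgd a).hasDerivAt).comp ν hin
    have := (hasDerivAt_id ν).mul h2
    refine HasDerivAt.congr_deriv this ?_
    simp; ring
  have hFd : HasDerivAt F (g a - ν * (deriv g a * g w)) ν := by
    refine hGd.congr_of_eventuallyEq ?_
    filter_upwards [eventually_gt_nhds hν] with μ hμ
    exact hF μ hμ
  have hderivF : deriv F ν = g a - ν * (deriv g a * g w) := hFd.deriv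
  -- sign analysis
  set t := g w / deriv g w with htdef
  have ht : t = ν * g w := by
    rw [htdef, hfoc]
    field_simp
  have haw : a - w = α - t := by
    simp only [hadef, hVdef, ← hwdef, ht]; ring
  have hc : deriv F ν = g a - deriv g a * t := by
    rw [hderivF, ht]; ring
  have main : (deriv F ν = 0 ↔ t = α) ∧ (0 < deriv F ν ↔ t < α) ∧ (deriv F ν < 0 ↔ α < t) := by
    rcases lt_trichotomy t α with hlt | heq | hgt
    · have hwa : w < a := by linarith
      have hll : t < g a / deriv g a := by
        simpa [htdef] using hlog (Set.mem_Ioi.mpr hwpos) (Set.mem_Ioi.mpr hapos) hwa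
      have hpos : 0 < deriv F ν := by
        rw [hc]
        have : deriv g a * t < deriv g a * (g a / deriv g a) :=
          (mul_lt_mul_iff_right₀ hg'apos).mpr hll
        rw [mul_div_cancel₀ _ (ne_of_gt hg'apos)] at this
        linarith
      refine ⟨⟨fun h => absurd h (by linarith), fun h => absurd hlt (by linarith)⟩,
        ⟨fun _ => hlt, fun _ => hpos⟩, ⟨fun h => absurd h (by linarith), fun h => absurd hlt (by linarith)⟩⟩
    · have hwa : a = w := by linarith
      have hzero : deriv F ν = 0 := by
        rw [hc, hwa, htdef]
        field_simp
        ring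
      refine ⟨⟨fun _ => heq, fun _ => hzero⟩, ⟨fun h => absurd h (by linarith), fun h => by linarith⟩,
        ⟨fun h => absurd h (by linarith), fun h => by linarith⟩⟩
    · have hwa : a < w := by linarith
      have hll : g a / deriv g a < t := by
        simpa [htdef] using hlog (Set.mem_Ioi.mpr hapos) (Set.mem_Ioi.mpr hwpos) hwa
      have hneg : deriv F ν < 0 := by
        rw [hc]
        have : deriv g a * (g a / deriv g a) < deriv g a * t :=
          (mul_lt_mul_iff_right₀ hg'apos).mpr hll
        rw [mul_div_cancel₀ _ (ne_of_gt hg'apos)] at this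
        linarith
      refine ⟨⟨fun h => absurd h (by linarith), fun h => absurd hgt (by linarith)⟩,
        ⟨fun h => by linarith, fun h => by linarith⟩, ⟨fun _ => hgt, fun _ => hneg⟩⟩
  exact main
end

section
/- Let g be continuously differentiable, strictly convex, strictly log-concave, with g(0)=g'(0)=0, g'(w)→∞ as w→∞, and suppose lim_{w→∞} g(w - g(w)/g'(w))/g'(w) = ∞. Fix α > 0. Then the function F(ν) = ν · g(α + max_{w≥0}(w - ν g(w))) is U-shaped in ν on (0,∞) (strictly decreasing then strictly increasing), its minimum value over ν > 0 equals α exactly, and the minimum is attained at the unique ν solving g(w*(ν))/g'(w*(ν)) = α. -/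
open Set Filter Topology

/-- `F(ν) = ν · g(α + max_{w≥0}(w - ν g(w)))` is U-shaped on `(0,∞)`, with minimum
value exactly `α`, attained at the unique `ν` solving `g(w*(ν))/g'(w*(ν)) = α`. -/
theorem stmt6 (g : ℝ → ℝ) (hg : ContDiff ℝ 1 g)
    (hsc : StrictConvexOn ℝ (Set.Ici (0 : ℝ)) g)
    (h0 : g 0 = 0) (h0' : deriv g 0 = 0)
    (hg'inf : Filter.Tendsto (deriv g) Filter.atTop Filter.atTop)
    (hlog : StrictMonoOn (fun w => g w / deriv g w) (Set.Ioi 0))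
    (hsuff : Filter.Tendsto (fun w => g (w - g w / deriv g w) / deriv g w)
      Filter.atTop Filter.atTop)
    (α : ℝ) (hα : 0 < α)
    (wstar : ℝ → ℝ)
    (hmax : ∀ ν : ℝ, 0 < ν → 0 ≤ wstar ν ∧
      IsMaxOn (fun x => x - ν * g x) (Set.Ici 0) (wstar ν))
    (huniq : ∀ ν : ℝ, 0 < ν → ∀ w : ℝ, 0 ≤ w →
      IsMaxOn (fun x => x - ν * g x) (Set.Ici 0) w → w = wstar ν)
    (F : ℝ → ℝ)
    (hF : ∀ ν : ℝ, 0 < ν → F ν = ν * g (α + (wstar ν - ν * g (wstar ν)))) :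
    ∃ ν₀ : ℝ, 0 < ν₀ ∧
      StrictAntiOn F (Set.Ioc 0 ν₀) ∧ StrictMonoOn F (Set.Ici ν₀) ∧
      F ν₀ = α ∧ (∀ ν : ℝ, 0 < ν → α ≤ F ν) ∧
      g (wstar ν₀) / deriv g (wstar ν₀) = α ∧
      (∀ ν : ℝ, 0 < ν → g (wstar ν) / deriv g (wstar ν) = α → ν = ν₀) := by
  have hdiff : ∀ x : ℝ, DifferentiableAt ℝ g x := fun x =>
    (hg.differentiable one_ne_zero).differentiableAt
  have hgc : Continuous g := hg.continuous
  have hg'c : Continuous (deriv g) := hg.continuous_deriv le_rfl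
  have hmono : StrictMonoOn (deriv g) (Set.Ici 0) :=
    hsc.strictMonoOn_deriv (fun x _ => hdiff x)
  have hmonoO : MonotoneOn (deriv g) (Set.Ici 0) := hmono.monotoneOn
  -- strict tangent line inequality
  have htang : ∀ x ∈ Set.Ici (0:ℝ), ∀ y ∈ Set.Ici (0:ℝ), x ≠ y →
      g x + deriv g x * (y - x) < g y := by
    intro x hx y hy hxy
    rcases lt_or_gt_of_ne hxy with h | h
    · have h1 := hsc.deriv_lt_slope hx hy h (hdiff x)
      rw [slope_def_field, lt_div_iff₀ (sub_pos.2 h)] at h1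
      linarith
    · have h1 := hsc.slope_lt_deriv hy hx h (hdiff x)
      rw [slope_def_field, div_lt_iff₀ (sub_pos.2 h)] at h1
      linarith
  have hg'pos : ∀ w : ℝ, 0 < w → 0 < deriv g w := fun w hw => by
    have := hmono (Set.mem_Ici.2 le_rfl) (Set.mem_Ici.2 hw.le) hw
    rwa [h0'] at this
  have hg'0 : ∀ x : ℝ, 0 ≤ x → 0 ≤ deriv g x := by
    intro x hx
    rcases eq_or_lt_of_le hx with rfl | h
    · exact le_of_eq h0'.symm
    · exact (hg'pos x h).le
  have hgpos : ∀ w : ℝ, 0 < w → 0 < g w := by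
    intro w hw
    have := htang 0 (Set.mem_Ici.2 le_rfl) w (Set.mem_Ici.2 hw.le) hw.ne
    rw [h0, h0'] at this; linarith
  have hglt : ∀ w : ℝ, 0 < w → g w < w * deriv g w := by
    intro w hw
    have := htang w (Set.mem_Ici.2 hw.le) 0 (Set.mem_Ici.2 le_rfl) hw.ne'
    rw [h0] at this; nlinarith
  have hgmono : ∀ x : ℝ, 0 ≤ x → ∀ y : ℝ, 0 ≤ y → x ≤ y → g x ≤ g y := by
    intro x hx y hy hxy
    rcases eq_or_lt_of_le hxy with rfl | h
    · exact le_rfl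
    · have h1 := htang x (Set.mem_Ici.2 hx) y (Set.mem_Ici.2 hy) h.ne
      nlinarith [hg'0 x hx]
  have ht_pos : ∀ w : ℝ, 0 < w → 0 < g w / deriv g w := fun w hw =>
    div_pos (hgpos w hw) (hg'pos w hw)
  have ht_lt : ∀ w : ℝ, 0 < w → g w / deriv g w < w := fun w hw =>
    (div_lt_iff₀ (hg'pos w hw)).2 (by nlinarith [hglt w hw])
  have hexist : ∀ c : ℝ, 0 < c → ∃ w, 0 < w ∧ deriv g w = c := by
    intro c hc
    obtain ⟨b, hb1, hb2⟩ :=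
      ((hg'inf.eventually (eventually_ge_atTop c)).and (eventually_ge_atTop 0)).exists
    obtain ⟨w, hwmem, hweq⟩ := intermediate_value_Icc hb2 hg'c.continuousOn
      ⟨by rw [h0']; exact hc.le, hb1⟩
    have hw0 : w ≠ 0 := by rintro rfl; rw [h0'] at hweq; exact hc.ne' hweq.symm
    exact ⟨w, lt_of_le_of_ne hwmem.1 (Ne.symm hw0), hweq⟩
  -- any positive critical point is the maximizer
  have hmax_of : ∀ ν : ℝ, 0 < ν → ∀ w : ℝ, 0 < w → deriv g w = 1/ν → w = wstar ν := by
    intro ν hν w hw hweq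
    have hνc : ν * deriv g w = 1 := by rw [hweq]; field_simp
    refine huniq ν hν w hw.le (isMaxOn_iff.mpr ?_)
    intro x hx
    rcases eq_or_ne x w with rfl | hne
    · exact le_rfl
    · have h1 := htang w (Set.mem_Ici.2 hw.le) x hx (Ne.symm hne)
      have h2 := mul_lt_mul_of_pos_left h1 hν
      have h3 : ν * (g w + deriv g w * (x - w)) = ν * g w + (ν * deriv g w) * (x - w) := by
        ring
      rw [h3, hνc, one_mul] at h2
      show x - ν * g x ≤ w - ν * g w
      linarith
  have hfoc : ∀ ν : ℝ, 0 < ν → 0 < wstar ν ∧ deriv g (wstar ν) = 1/ν := by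
    intro ν hν
    obtain ⟨w, hw, he⟩ := hexist (1/ν) (by positivity)
    have h := hmax_of ν hν w hw he
    rw [← h]; exact ⟨hw, he⟩
  have hνg : ∀ ν : ℝ, 0 < ν → ν * g (wstar ν) = g (wstar ν) / deriv g (wstar ν) := by
    intro ν hν
    rw [(hfoc ν hν).2, one_div, div_inv_eq_mul, mul_comm]
  have hw_anti : ∀ ν₁ ν₂ : ℝ, 0 < ν₁ → ν₁ < ν₂ → wstar ν₂ < wstar ν₁ := by
    intro ν₁ ν₂ h1 h12
    have h2 : 0 < ν₂ := h1.trans h12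
    have hd : deriv g (wstar ν₂) < deriv g (wstar ν₁) := by
      rw [(hfoc ν₁ h1).2, (hfoc ν₂ h2).2]
      exact one_div_lt_one_div_of_lt h1 h12
    by_contra hle
    push_neg at hle
    exact absurd (hmonoO (Set.mem_Ici.2 (hfoc ν₁ h1).1.le)
      (Set.mem_Ici.2 (hfoc ν₂ h2).1.le) hle) (not_le.2 hd)
  have htinf : Tendsto (fun w => g w / deriv g w) atTop atTop := by
    apply tendsto_atTop_mono' atTop ?_ hsuff
    filter_upwards [eventually_gt_atTop 0] with w hw
    have h1 : 0 < deriv g w := hg'pos w hw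
    have h2 : 0 ≤ w - g w / deriv g w := sub_nonneg.2 (ht_lt w hw).le
    have h3 : g (w - g w / deriv g w) ≤ g w :=
      hgmono _ h2 _ hw.le (by linarith [ht_pos w hw])
    exact (div_le_div_iff_of_pos_right h1).2 h3
  obtain ⟨b, hb1, hb2⟩ :=
    ((htinf.eventually (eventually_gt_atTop α)).and (eventually_gt_atTop (α/2))).exists
  have hta : g (α/2) / deriv g (α/2) < α := (ht_lt _ (half_pos hα)).trans (half_lt_self hα)
  have hcontt : ContinuousOn (fun w => g w / deriv g w) (Set.Icc (α/2) b) :=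
    ContinuousOn.div hgc.continuousOn hg'c.continuousOn
      (fun x hx => (hg'pos x (lt_of_lt_of_le (half_pos hα) hx.1)).ne')
  obtain ⟨w₀, hw₀mem, hw₀⟩ := intermediate_value_Icc hb2.le hcontt ⟨hta.le, hb1.le⟩
  have hw₀pos : 0 < w₀ := lt_of_lt_of_le (half_pos hα) hw₀mem.1
  set ν₀ := 1 / deriv g w₀ with hν₀def
  have hν₀pos : 0 < ν₀ := one_div_pos.2 (hg'pos w₀ hw₀pos)
  have hw₀star : w₀ = wstar ν₀ := hmax_of ν₀ hν₀pos w₀ hw₀pos (by rw [hν₀def, one_div_one_div])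
  have ht₀ : g (wstar ν₀) / deriv g (wstar ν₀) = α := by rw [← hw₀star]; exact hw₀
  -- value of F: equality case and strict case
  have hm0 : ∀ ν : ℝ, 0 < ν → 0 ≤ wstar ν - ν * g (wstar ν) := by
    intro ν hν
    have h := isMaxOn_iff.mp (hmax ν hν).2 0 (Set.mem_Ici.2 le_rfl)
    simp only [h0, mul_zero, sub_zero] at h
    exact h
  have hcases : ∀ ν : ℝ, 0 < ν →
      (g (wstar ν) / deriv g (wstar ν) = α → F ν = α) ∧
      (g (wstar ν) / deriv g (wstar ν) ≠ α → α < F ν) := by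
    intro ν hν
    have hwpos := (hfoc ν hν).1
    have hw' := (hfoc ν hν).2
    have hνg' := hνg ν hν
    have haw : α + (wstar ν - ν * g (wstar ν)) - wstar ν
        = α - g (wstar ν) / deriv g (wstar ν) := by rw [← hνg']; ring
    constructor
    · intro he
      have ha : α + (wstar ν - ν * g (wstar ν)) = wstar ν := by
        rw [he] at haw; linarith
      rw [hF ν hν, ha, hνg', he]
    · intro hne
      have hane : α + (wstar ν - ν * g (wstar ν)) ≠ wstar ν := by
        intro h; rw [h] at haw; apply hne; linarith
      have hage : (0:ℝ) ≤ α + (wstar ν - ν * g (wstar ν)) := by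
        have := hm0 ν hν; linarith
      have h1 := htang (wstar ν) (Set.mem_Ici.2 hwpos.le) _ (Set.mem_Ici.2 hage)
        (Ne.symm hane)
      have h2 : ν * deriv g (wstar ν) = 1 := by rw [hw']; field_simp
      have h3 := mul_lt_mul_of_pos_left h1 hν
      have h4 : ν * (g (wstar ν) + deriv g (wstar ν) *
            (α + (wstar ν - ν * g (wstar ν)) - wstar ν))
          = ν * g (wstar ν) + (ν * deriv g (wstar ν)) *
            (α + (wstar ν - ν * g (wstar ν)) - wstar ν) := by ring
      rw [h4, h2, one_mul] at h3
      rw [hF ν hν]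
      linarith [haw, hνg']
  have huniq₀ : ∀ ν : ℝ, 0 < ν → g (wstar ν) / deriv g (wstar ν) = α → ν = ν₀ := by
    intro ν hν he
    have h1 : wstar ν = wstar ν₀ := hlog.injOn (Set.mem_Ioi.2 (hfoc ν hν).1)
      (Set.mem_Ioi.2 (hfoc ν₀ hν₀pos).1) (by rw [he, ht₀])
    have h2 : (1:ℝ)/ν = 1/ν₀ := by
      rw [← (hfoc ν hν).2, h1, (hfoc ν₀ hν₀pos).2]
    field_simp at h2
    linarith
  -- continuity of wstar on positives
  have hWcont : ∀ ν : ℝ, 0 < ν → ContinuousAt wstar ν := by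
    intro ν hν
    rw [Metric.continuousAt_iff]
    intro ε hε
    have hwpos : 0 < wstar ν := (hfoc ν hν).1
    set ε' := min (ε/2) (wstar ν / 2) with hε'def
    have hε'pos : 0 < ε' := lt_min (half_pos hε) (half_pos hwpos)
    have hε'le : ε' ≤ wstar ν / 2 := min_le_right _ _
    have hlo : deriv g (wstar ν - ε') < 1/ν := by
      rw [← (hfoc ν hν).2]
      exact hmono (Set.mem_Ici.2 (by linarith)) (Set.mem_Ici.2 hwpos.le) (by linarith)
    have hhi : (1:ℝ)/ν < deriv g (wstar ν + ε') := by
      rw [← (hfoc ν hν).2]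
      exact hmono (Set.mem_Ici.2 hwpos.le) (Set.mem_Ici.2 (by linarith)) (by linarith)
    have hcont1 : ContinuousAt (fun x : ℝ => 1/x) ν :=
      (continuousAt_const.div continuousAt_id hν.ne')
    have h1 : ∀ᶠ x in 𝓝 ν, (1:ℝ)/x ∈ Set.Ioo (deriv g (wstar ν - ε')) (deriv g (wstar ν + ε')) :=
      hcont1 (Ioo_mem_nhds hlo hhi)
    have h2 : ∀ᶠ x in 𝓝 ν, 0 < x := eventually_gt_nhds hν
    obtain ⟨δ, hδpos, hδ⟩ := Metric.eventually_nhds_iff.mp (h1.and h2)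
    refine ⟨δ, hδpos, ?_⟩
    intro x hx
    obtain ⟨hmem, hxpos⟩ := hδ hx
    have hx1 : deriv g (wstar x) = 1/x := (hfoc x hxpos).2
    have hxw : 0 < wstar x := (hfoc x hxpos).1
    have hgt : wstar ν - ε' < wstar x := by
      by_contra hle
      push_neg at hle
      have := hmonoO (Set.mem_Ici.2 hxw.le) (Set.mem_Ici.2 (by linarith : (0:ℝ) ≤ wstar ν - ε')) hle
      rw [hx1] at this
      exact absurd hmem.1 (not_lt.2 this)
    have hlt : wstar x < wstar ν + ε' := by
      by_contra hle
      push_neg at hle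
      have := hmonoO (Set.mem_Ici.2 (by linarith : (0:ℝ) ≤ wstar ν + ε')) (Set.mem_Ici.2 hxw.le) hle
      rw [hx1] at this
      exact absurd hmem.2 (not_lt.2 this)
    rw [Real.dist_eq]
    have h3 : ε' ≤ ε/2 := min_le_left _ _
    rw [abs_lt]
    constructor <;> linarith
  -- derivative of the value function M
  have hMderiv : ∀ ν : ℝ, 0 < ν →
      HasDerivAt (fun x => wstar x - x * g (wstar x)) (-(g (wstar ν))) ν := by
    intro ν hν
    rw [hasDerivAt_iff_tendsto_slope]
    have hb0 : Tendsto (fun x => |g (wstar x) - g (wstar ν)|) (𝓝[≠] ν) (𝓝 0) := by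
      have h1 : ContinuousAt (fun x => g (wstar x)) ν := hgc.continuousAt.comp (hWcont ν hν)
      have h2 : Tendsto (fun x => g (wstar x) - g (wstar ν)) (𝓝[≠] ν) (𝓝 0) := by
        have h2' : Tendsto (fun x => g (wstar x) - g (wstar ν)) (𝓝 ν)
            (𝓝 (g (wstar ν) - g (wstar ν))) := h1.tendsto.sub_const _
        rw [sub_self] at h2'
        exact h2'.mono_left nhdsWithin_le_nhds
      simpa using h2.abs
    have hev : ∀ᶠ x in 𝓝[≠] ν,
        ‖slope (fun x => wstar x - x * g (wstar x)) ν x - (-(g (wstar ν)))‖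
          ≤ |g (wstar x) - g (wstar ν)| := by
      have hpos : ∀ᶠ x in 𝓝[≠] ν, 0 < x :=
        eventually_nhdsWithin_of_eventually_nhds (eventually_gt_nhds hν)
      filter_upwards [hpos, self_mem_nhdsWithin] with x hxpos hxne
      have hxne' : x ≠ ν := hxne
      have h1 : wstar ν - x * g (wstar ν) ≤ wstar x - x * g (wstar x) :=
        isMaxOn_iff.mp (hmax x hxpos).2 _ (Set.mem_Ici.2 (hfoc ν hν).1.le)
      have h2 : wstar x - ν * g (wstar x) ≤ wstar ν - ν * g (wstar ν) :=
        isMaxOn_iff.mp (hmax ν hν).2 _ (Set.mem_Ici.2 (hfoc x hxpos).1.le)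
      have hE1 : 0 ≤ (wstar x - x * g (wstar x)) - (wstar ν - ν * g (wstar ν))
          + (x - ν) * g (wstar ν) := by nlinarith [h1]
      have hE2 : (wstar x - x * g (wstar x)) - (wstar ν - ν * g (wstar ν))
          + (x - ν) * g (wstar ν) ≤ (x - ν) * (g (wstar ν) - g (wstar x)) := by nlinarith [h2]
      have hxνne : x - ν ≠ 0 := sub_ne_zero.2 hxne'
      have heq : slope (fun x => wstar x - x * g (wstar x)) ν x - (-(g (wstar ν)))
          = ((wstar x - x * g (wstar x)) - (wstar ν - ν * g (wstar ν))
              + (x - ν) * g (wstar ν)) / (x - ν) := by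
        rw [slope_def_field]
        field_simp
        ring
      rw [heq, Real.norm_eq_abs, abs_div]
      rw [div_le_iff₀ (abs_pos.2 hxνne)]
      have habs : |(wstar x - x * g (wstar x)) - (wstar ν - ν * g (wstar ν))
          + (x - ν) * g (wstar ν)| ≤ |x - ν| * |g (wstar x) - g (wstar ν)| := by
        rw [abs_of_nonneg hE1]
        calc (wstar x - x * g (wstar x)) - (wstar ν - ν * g (wstar ν)) + (x - ν) * g (wstar ν)
            ≤ (x - ν) * (g (wstar ν) - g (wstar x)) := hE2
          _ ≤ |(x - ν) * (g (wstar ν) - g (wstar x))| := le_abs_self _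
          _ = |x - ν| * |g (wstar x) - g (wstar ν)| := by
              rw [abs_mul, abs_sub_comm (g (wstar ν)) (g (wstar x))]
      exact habs.trans_eq (mul_comm _ _)
    have h3 := squeeze_zero_norm' hev hb0
    have h4 := h3.add (tendsto_const_nhds (x := -(g (wstar ν))) (f := 𝓝[≠] ν))
    simpa using h4
  -- derivative of F on positives
  have hFderiv : ∀ ν : ℝ, 0 < ν → HasDerivAt F
      (g (α + (wstar ν - ν * g (wstar ν)))
        - ν * (deriv g (α + (wstar ν - ν * g (wstar ν))) * g (wstar ν))) ν := by
    intro ν hν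
    have h1 : HasDerivAt (fun x => α + (wstar x - x * g (wstar x))) (-(g (wstar ν))) ν :=
      (hMderiv ν hν).const_add α
    have h2 : HasDerivAt (fun x => g (α + (wstar x - x * g (wstar x))))
        (deriv g (α + (wstar ν - ν * g (wstar ν))) * (-(g (wstar ν)))) ν :=
      ((hdiff _).hasDerivAt.comp ν h1)
    have h3 : HasDerivAt (fun x => x * g (α + (wstar x - x * g (wstar x))))
        (1 * g (α + (wstar ν - ν * g (wstar ν)))
          + ν * (deriv g (α + (wstar ν - ν * g (wstar ν))) * (-(g (wstar ν))))) ν :=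
      (hasDerivAt_id ν).mul h2
    have h4 : F =ᶠ[𝓝 ν] fun x => x * g (α + (wstar x - x * g (wstar x))) := by
      filter_upwards [eventually_gt_nhds hν] with x hx
      exact hF x hx
    have h5 := h3.congr_of_eventuallyEq h4
    exact h5.congr_deriv (by ring)
  -- sign of the derivative
  have hsign : ∀ ν : ℝ, 0 < ν → ν ≠ ν₀ →
      ((ν₀ < ν → 0 < g (α + (wstar ν - ν * g (wstar ν)))
          - ν * (deriv g (α + (wstar ν - ν * g (wstar ν))) * g (wstar ν))) ∧
       (ν < ν₀ → g (α + (wstar ν - ν * g (wstar ν)))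
          - ν * (deriv g (α + (wstar ν - ν * g (wstar ν))) * g (wstar ν)) < 0)) := by
    intro ν hν hne
    have hwpos := (hfoc ν hν).1
    have hνg' := hνg ν hν
    have hapos : 0 < α + (wstar ν - ν * g (wstar ν)) := by
      have := hm0 ν hν; linarith
    have hga' : 0 < deriv g (α + (wstar ν - ν * g (wstar ν))) := hg'pos _ hapos
    have hprod : ν * (deriv g (α + (wstar ν - ν * g (wstar ν))) * g (wstar ν))
        = g (wstar ν) / deriv g (wstar ν) * deriv g (α + (wstar ν - ν * g (wstar ν))) := by
      rw [← hνg']; ring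
    have haw : α + (wstar ν - ν * g (wstar ν)) - wstar ν
        = α - g (wstar ν) / deriv g (wstar ν) := by rw [← hνg']; ring
    constructor
    · intro hgt
      have hwlt : wstar ν < wstar ν₀ := hw_anti ν₀ ν hν₀pos hgt
      have htlt : g (wstar ν) / deriv g (wstar ν) < α := by
        have := hlog (Set.mem_Ioi.2 hwpos) (Set.mem_Ioi.2 (hfoc ν₀ hν₀pos).1) hwlt
        simp only at this
        rwa [ht₀] at this
      have halt : wstar ν < α + (wstar ν - ν * g (wstar ν)) := by linarith [haw]
      have hloga := hlog (Set.mem_Ioi.2 hwpos) (Set.mem_Ioi.2 hapos) halt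
      simp only at hloga
      have h6 := (lt_div_iff₀ hga').1 hloga
      rw [hprod]
      linarith
    · intro hlt
      have hwgt : wstar ν₀ < wstar ν := hw_anti ν ν₀ hν hlt
      have htgt : α < g (wstar ν) / deriv g (wstar ν) := by
        have := hlog (Set.mem_Ioi.2 (hfoc ν₀ hν₀pos).1) (Set.mem_Ioi.2 hwpos) hwgt
        simp only at this
        rwa [ht₀] at this
      have halt : α + (wstar ν - ν * g (wstar ν)) < wstar ν := by linarith [haw]
      have hloga := hlog (Set.mem_Ioi.2 hapos) (Set.mem_Ioi.2 hwpos) halt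
      simp only at hloga
      have h6 := (div_lt_iff₀ hga').1 hloga
      rw [hprod]
      linarith
  have hFcont : ∀ x ∈ Set.Ioi (0:ℝ), ContinuousAt F x := fun x hx =>
    (hFderiv x hx).differentiableAt.continuousAt
  have hanti : StrictAntiOn F (Set.Ioc 0 ν₀) := by
    apply strictAntiOn_of_deriv_neg (convex_Ioc 0 ν₀)
    · exact fun x hx => (hFcont x hx.1).continuousWithinAt
    · intro x hx
      rw [interior_Ioc] at hx
      rw [(hFderiv x hx.1).deriv]
      exact (hsign x hx.1 hx.2.ne).2 hx.2
  have hmonoF : StrictMonoOn F (Set.Ici ν₀) := by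
    apply strictMonoOn_of_deriv_pos (convex_Ici ν₀)
    · exact fun x hx => (hFcont x (lt_of_lt_of_le hν₀pos hx)).continuousWithinAt
    · intro x hx
      rw [interior_Ici] at hx
      rw [(hFderiv x (hν₀pos.trans hx)).deriv]
      exact (hsign x (hν₀pos.trans hx) hx.ne').1 hx
  refine ⟨ν₀, hν₀pos, hanti, hmonoF, (hcases ν₀ hν₀pos).1 ht₀, ?_, ht₀, huniq₀⟩
  intro ν hν
  rcases eq_or_ne (g (wstar ν) / deriv g (wstar ν)) α with he | hne
  · exact le_of_eq ((hcases ν hν).1 he).symm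
  · exact ((hcases ν hν).2 hne).le
end

section
/- Under the assumptions of the previous statement (g continuously differentiable, strictly convex, strictly log-concave, g(0)=g'(0)=0, g'→∞, and lim_{w→∞} g(w - g(w)/g'(w))/g'(w) = ∞), for any constants α > 0 and C > 1, the equation ν · g(α + max_{w≥0}(w - ν g(w))) = αC has exactly two solutions in ν ∈ (0,∞). -/
open Set Filter Topology

/-- The equation `ν · g(α + max_{w≥0}(w - ν g(w))) = αC` has exactly two
solutions in `ν ∈ (0,∞)` when `C > 1`. -/
theorem stmt7 (g : ℝ → ℝ) (hg : ContDiff ℝ 1 g)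
    (hsc : StrictConvexOn ℝ (Set.Ici (0 : ℝ)) g)
    (h0 : g 0 = 0) (h0' : deriv g 0 = 0)
    (hg'inf : Filter.Tendsto (deriv g) Filter.atTop Filter.atTop)
    (hlog : StrictMonoOn (fun w => g w / deriv g w) (Set.Ioi 0))
    (hsuff : Filter.Tendsto (fun w => g (w - g w / deriv g w) / deriv g w)
      Filter.atTop Filter.atTop)
    (α C : ℝ) (hα : 0 < α) (hC : 1 < C)
    (wstar : ℝ → ℝ)
    (hmax : ∀ ν : ℝ, 0 < ν → 0 ≤ wstar ν ∧
      IsMaxOn (fun x => x - ν * g x) (Set.Ici 0) (wstar ν))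
    (huniq : ∀ ν : ℝ, 0 < ν → ∀ w : ℝ, 0 ≤ w →
      IsMaxOn (fun x => x - ν * g x) (Set.Ici 0) w → w = wstar ν)
    (F : ℝ → ℝ)
    (hF : ∀ ν : ℝ, 0 < ν → F ν = ν * g (α + (wstar ν - ν * g (wstar ν)))) :
    ∃ ν₁ ν₂ : ℝ, 0 < ν₁ ∧ ν₁ < ν₂ ∧ F ν₁ = α * C ∧ F ν₂ = α * C ∧
      ∀ ν : ℝ, 0 < ν → F ν = α * C → ν = ν₁ ∨ ν = ν₂ := by
  have hdiff : Differentiable ℝ g := hg.differentiable one_ne_zero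
  have hgc : Continuous g := hdiff.continuous
  have hg'c : Continuous (deriv g) := hg.continuous_deriv le_rfl
  have hg'mono : StrictMonoOn (deriv g) (Set.Ici 0) :=
    hsc.strictMonoOn_deriv fun x _ => hdiff x
  have hg'pos : ∀ w : ℝ, 0 < w → 0 < deriv g w := by
    intro w hw
    have := hg'mono Set.self_mem_Ici (Set.mem_Ici.mpr hw.le) hw
    rwa [h0'] at this
  have hgmono : StrictMonoOn g (Set.Ici 0) := by
    apply strictMonoOn_of_deriv_pos (convex_Ici 0) hgc.continuousOn
    intro x hx
    rw [interior_Ici] at hx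
    exact hg'pos x hx
  have hgpos : ∀ w : ℝ, 0 < w → 0 < g w := by
    intro w hw
    have := hgmono Set.self_mem_Ici (Set.mem_Ici.mpr hw.le) hw
    rwa [h0] at this
  -- tangent line inequality
  have htan : ∀ w ∈ Set.Ici (0:ℝ), ∀ x ∈ Set.Ici (0:ℝ),
      g w + deriv g w * (x - w) ≤ g x := by
    intro w hw x hx
    rcases lt_trichotomy w x with h | h | h
    · have hs := hsc.convexOn.deriv_le_slope hw hx h (hdiff w)
      rw [slope_def_field] at hs
      have := (le_div_iff₀ (by linarith)).mp hs
      linarith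
    · simp [h]
    · have hs := hsc.convexOn.slope_le_deriv hx hw h (hdiff w)
      rw [slope_def_field] at hs
      have := (div_le_iff₀ (by linarith)).mp hs
      linarith
  -- first order condition
  have hws : ∀ ν : ℝ, 0 < ν → 0 < wstar ν ∧ ν * deriv g (wstar ν) = 1 := by
    intro ν hν
    obtain ⟨hw0, hwmax⟩ := hmax ν hν
    have hwpos : 0 < wstar ν := by
      rcases hw0.lt_or_eq with h | h
      · exact h
      · exfalso
        have hd : HasDerivAt (fun x => x - ν * g x) (1 - ν * deriv g 0) 0 :=
          (hasDerivAt_id 0).sub ((hdiff 0).hasDerivAt.const_mul ν)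
        rw [h0', mul_zero, sub_zero] at hd
        have hts := hasDerivAt_iff_tendsto_slope.mp hd
        have h2 : Filter.Tendsto (slope (fun x => x - ν * g x) 0) (𝓝[>] 0) (𝓝 1) :=
          hts.mono_left (nhdsWithin_mono _ fun x hx => ne_of_gt hx)
        have h3 : ∀ᶠ x in 𝓝[>] (0:ℝ), (1:ℝ)/2 < slope (fun x => x - ν * g x) 0 x :=
          h2.eventually (eventually_gt_nhds (by norm_num))
        obtain ⟨x, hx1, hx2⟩ := (h3.and self_mem_nhdsWithin).exists
        have hxpos : (0:ℝ) < x := hx2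
        have hxle : x - ν * g x ≤ wstar ν - ν * g (wstar ν) :=
          hwmax (Set.mem_Ici.mpr hxpos.le)
        rw [← h, h0] at hxle
        have hsl : slope (fun x => x - ν * g x) 0 x = (x - ν * g x) / x := by
          simp [slope_def_field, h0]
        rw [hsl] at hx1
        have hcon := (lt_div_iff₀ hxpos).mp hx1
        nlinarith
    refine ⟨hwpos, ?_⟩
    have hloc : IsLocalMax (fun x => x - ν * g x) (wstar ν) :=
      hwmax.filter_mono (le_principal_iff.mpr (Ici_mem_nhds hwpos))
    have hd : HasDerivAt (fun x => x - ν * g x) (1 - ν * deriv g (wstar ν)) (wstar ν) :=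
      (hasDerivAt_id _).sub ((hdiff _).hasDerivAt.const_mul ν)
    have := hloc.hasDerivAt_eq_zero hd
    linarith
  -- inverse characterization
  have hinv : ∀ w : ℝ, 0 < w → wstar (1 / deriv g w) = w := by
    intro w hw
    have hg'w := hg'pos w hw
    have hν : 0 < 1 / deriv g w := by positivity
    have hmaxw : IsMaxOn (fun x => x - (1 / deriv g w) * g x) (Set.Ici 0) w := by
      intro x hx
      simp only [Set.mem_setOf_eq]
      have ht := htan w hw.le x hx
      have h1 : (1 / deriv g w) * (g w + deriv g w * (x - w)) ≤ (1 / deriv g w) * g x :=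
        mul_le_mul_of_nonneg_left ht hν.le
      have h2 : (1 / deriv g w) * (deriv g w * (x - w)) = x - w := by
        field_simp
      nlinarith [h1, h2]
    exact (huniq _ hν w hw.le hmaxw).symm
  -- strict antitonicity of wstar
  have hanti : StrictAntiOn wstar (Set.Ioi 0) := by
    intro ν₁ h1 ν₂ h2 h12
    obtain ⟨hw1, hd1⟩ := hws ν₁ h1
    obtain ⟨hw2, hd2⟩ := hws ν₂ h2
    by_contra hle
    push_neg at hle
    have hmono := hg'mono.monotoneOn (Set.mem_Ici.mpr hw1.le) (Set.mem_Ici.mpr hw2.le) hle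
    have e1 : deriv g (wstar ν₁) = 1 / ν₁ := by
      rw [eq_div_iff h1.ne']; linear_combination hd1
    have e2 : deriv g (wstar ν₂) = 1 / ν₂ := by
      rw [eq_div_iff h2.ne']; linear_combination hd2
    rw [e1, e2] at hmono
    have : 1 / ν₂ < 1 / ν₁ := by
      apply div_lt_div_of_pos_left one_pos h1 h12
    linarith
  -- continuity of wstar on Ioi 0
  have hwcont : ∀ ν : ℝ, 0 < ν → ContinuousAt wstar ν := by
    intro ν hν
    have hmono : StrictMonoOn (fun x => -wstar x) (Set.Ioi 0) :=
      fun a ha b hb hab => neg_lt_neg (hanti ha hb hab)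
    have himg : (fun x => -wstar x) '' Set.Ioi 0 ∈ 𝓝 (-wstar ν) := by
      have hsub : Set.Iio (0:ℝ) ⊆ (fun x => -wstar x) '' Set.Ioi 0 := by
        intro y hy
        have hypos : (0:ℝ) < -y := by simpa using hy
        refine ⟨1 / deriv g (-y), ?_, ?_⟩
        · have := hg'pos _ hypos; exact Set.mem_Ioi.mpr (by positivity)
        · show -wstar (1 / deriv g (-y)) = y
          rw [hinv _ hypos]; ring
      exact Filter.mem_of_superset (Iio_mem_nhds (neg_lt_zero.mpr (hws ν hν).1)) hsub
    have := hmono.continuousAt_of_image_mem_nhds (Ioi_mem_nhds hν) himg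
    convert this.neg using 1
    funext x
    simp
  -- M and its derivative
  set M : ℝ → ℝ := fun ν => wstar ν - ν * g (wstar ν) with hMdef
  have hMnonneg : ∀ ν : ℝ, 0 < ν → 0 ≤ M ν := by
    intro ν hν
    have := (hmax ν hν).2 Set.self_mem_Ici
    simpa [h0, hMdef] using this
  have hMd : ∀ ν : ℝ, 0 < ν → HasDerivAt M (-(g (wstar ν))) ν := by
    intro ν hν
    rw [hasDerivAt_iff_tendsto_slope]
    rw [← tendsto_sub_nhds_zero_iff]
    apply squeeze_zero_norm' (a := fun ν' => |g (wstar ν') - g (wstar ν)|)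
    · have hmem : Set.Ioi (0:ℝ) ∈ 𝓝[≠] ν :=
        nhdsWithin_le_nhds (Ioi_mem_nhds hν)
      filter_upwards [hmem, self_mem_nhdsWithin] with ν' hν' hne
      have hν'pos : (0:ℝ) < ν' := hν'
      have hnee : ν' ≠ ν := hne
      have h1 : wstar ν - ν' * g (wstar ν) ≤ M ν' :=
        (hmax ν' hν'pos).2 (Set.mem_Ici.mpr (hws ν hν).1.le)
      have h2 : wstar ν' - ν * g (wstar ν') ≤ M ν :=
        (hmax ν hν).2 (Set.mem_Ici.mpr (hws ν' hν'pos).1.le)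
      have hMν : M ν = wstar ν - ν * g (wstar ν) := rfl
      have hMν' : M ν' = wstar ν' - ν' * g (wstar ν') := rfl
      rw [Real.norm_eq_abs, slope_def_field]
      rcases hnee.lt_or_gt with h | h
      · have hd : ν' - ν < 0 := by linarith
        have s1 : (M ν' - M ν) / (ν' - ν) ≤ -g (wstar ν) := by
          rw [div_le_iff_of_neg hd]; nlinarith
        have s2 : -g (wstar ν') ≤ (M ν' - M ν) / (ν' - ν) := by
          rw [le_div_iff_of_neg hd]; nlinarith
        rw [abs_le]
        constructor <;>
          linarith [neg_abs_le (g (wstar ν') - g (wstar ν)),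
            le_abs_self (g (wstar ν') - g (wstar ν))]
      · have hd : 0 < ν' - ν := by linarith
        have s1 : -g (wstar ν) ≤ (M ν' - M ν) / (ν' - ν) := by
          rw [le_div_iff₀ hd]; nlinarith
        have s2 : (M ν' - M ν) / (ν' - ν) ≤ -g (wstar ν') := by
          rw [div_le_iff₀ hd]; nlinarith
        rw [abs_le]
        constructor <;>
          linarith [neg_abs_le (g (wstar ν') - g (wstar ν)),
            le_abs_self (g (wstar ν') - g (wstar ν))]
    · have h1 : ContinuousAt (fun ν' => g (wstar ν')) ν :=
        hgc.continuousAt.comp (hwcont ν hν)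
      have h2 : Filter.Tendsto (fun ν' => |g (wstar ν') - g (wstar ν)|) (𝓝 ν) (𝓝 0) := by
        have h3 : ContinuousAt (fun ν' => |g (wstar ν') - g (wstar ν)|) ν :=
          (h1.sub (continuousAt_const (y := g (wstar ν)))).abs
        have h4 := h3.tendsto
        simpa using h4
      exact h2.mono_left nhdsWithin_le_nhds
  -- F₀ and its derivative
  set F₀ : ℝ → ℝ := fun ν => ν * g (α + M ν) with hF₀def
  have hFeq : ∀ ν : ℝ, 0 < ν → F ν = F₀ ν := by
    intro ν hν; rw [hF ν hν]
  have hApos : ∀ ν : ℝ, 0 < ν → 0 < α + M ν := by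
    intro ν hν; have := hMnonneg ν hν; linarith
  have hF₀d : ∀ ν : ℝ, 0 < ν →
      HasDerivAt F₀ (g (α + M ν) - ν * g (wstar ν) * deriv g (α + M ν)) ν := by
    intro ν hν
    have h1 : HasDerivAt (fun ν' => α + M ν') (-(g (wstar ν))) ν := (hMd ν hν).const_add α
    have h2 : HasDerivAt (fun ν' => g (α + M ν')) (deriv g (α + M ν) * (-(g (wstar ν)))) ν :=
      (hdiff _).hasDerivAt.comp ν h1
    have h3 := (hasDerivAt_id ν).mul h2
    have : HasDerivAt (fun x => x * g (α + M x))
        (1 * g (α + M ν) + ν * (deriv g (α + M ν) * -g (wstar ν))) ν := by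
      simpa [Pi.mul_def] using h3
    convert this using 1
    ring
  -- sign of derivative
  have hkey : ∀ ν : ℝ, 0 < ν →
      (g (wstar ν) / deriv g (wstar ν) < α →
        0 < g (α + M ν) - ν * g (wstar ν) * deriv g (α + M ν)) ∧
      (α < g (wstar ν) / deriv g (wstar ν) →
        g (α + M ν) - ν * g (wstar ν) * deriv g (α + M ν) < 0) := by
    intro ν hν
    obtain ⟨hwpos, hfoc⟩ := hws ν hν
    have hdw : 0 < deriv g (wstar ν) := hg'pos _ hwpos
    have hνg : ν * g (wstar ν) = g (wstar ν) / deriv g (wstar ν) := by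
      rw [eq_div_iff hdw.ne']; linear_combination g (wstar ν) * hfoc
    have hMe : M ν = wstar ν - ν * g (wstar ν) := rfl
    have hA : α + M ν = α + wstar ν - g (wstar ν) / deriv g (wstar ν) := by
      rw [hMe, hνg]; ring
    have hApos' : 0 < α + M ν := hApos ν hν
    have hdA : 0 < deriv g (α + M ν) := hg'pos _ hApos'
    have hgAeq : g (α + M ν) = g (α + M ν) / deriv g (α + M ν) * deriv g (α + M ν) :=
      (div_mul_cancel₀ _ hdA.ne').symm
    constructor
    · intro hlt
      have hwA : wstar ν < α + M ν := by rw [hA]; linarith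
      have := hlog (Set.mem_Ioi.mpr hwpos) (Set.mem_Ioi.mpr hApos') hwA
      simp only at this
      have hmul := mul_lt_mul_of_pos_right this hdA
      rw [hνg]
      nlinarith
    · intro hlt
      have hwA : α + M ν < wstar ν := by rw [hA]; linarith
      have := hlog (Set.mem_Ioi.mpr hApos') (Set.mem_Ioi.mpr hwpos) hwA
      simp only at this
      have hmul := mul_lt_mul_of_pos_right this hdw
      rw [hνg]
      nlinarith
  -- G bounded by w
  have hGle : ∀ w : ℝ, 0 < w → g w / deriv g w ≤ w := by
    intro w hw
    have hs := hsc.convexOn.slope_le_deriv Set.self_mem_Ici (Set.mem_Ici.mpr hw.le) hw (hdiff w)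
    rw [slope_def_field, h0] at hs
    have hdw := hg'pos w hw
    rw [div_le_iff₀ hdw]
    have := (div_le_iff₀ (by linarith : (0:ℝ) < w - 0)).mp hs
    nlinarith
  -- limits
  have hlim_top : Filter.Tendsto F₀ Filter.atTop Filter.atTop := by
    apply tendsto_atTop_mono' _ _ (Filter.Tendsto.atTop_mul_const (hgpos α hα) tendsto_id)
    filter_upwards [eventually_gt_atTop (0:ℝ)] with ν hν
    have h1 : g α ≤ g (α + M ν) :=
      hgmono.monotoneOn (Set.mem_Ici.mpr hα.le)
        (Set.mem_Ici.mpr (hApos ν hν).le) (by have := hMnonneg ν hν; linarith)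
    have : ν * g α ≤ ν * g (α + M ν) := mul_le_mul_of_nonneg_left h1 hν.le
    simpa [hF₀def] using this
  have hwtop : Filter.Tendsto wstar (𝓝[>] (0:ℝ)) Filter.atTop := by
    rw [tendsto_atTop]
    intro K
    set w₁ : ℝ := max K 1 with hw₁
    have hw₁pos : 0 < w₁ := lt_of_lt_of_le one_pos (le_max_right _ _)
    have hν₁pos : 0 < 1 / deriv g w₁ := by have := hg'pos w₁ hw₁pos; positivity
    filter_upwards [Ioo_mem_nhdsGT hν₁pos] with ν hν
    obtain ⟨hν0, hνlt⟩ := hν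
    have := hanti (Set.mem_Ioi.mpr hν0) (Set.mem_Ioi.mpr hν₁pos) hνlt
    rw [hinv w₁ hw₁pos] at this
    exact (le_max_left K 1).trans this.le
  have hlim_zero : Filter.Tendsto F₀ (𝓝[>] (0:ℝ)) Filter.atTop := by
    apply tendsto_atTop_mono' _ _ (hsuff.comp hwtop)
    filter_upwards [self_mem_nhdsWithin] with ν hν
    have hνpos : (0:ℝ) < ν := hν
    obtain ⟨hwpos, hfoc⟩ := hws ν hνpos
    have hdw : 0 < deriv g (wstar ν) := hg'pos _ hwpos
    have hνeq : ν = 1 / deriv g (wstar ν) := by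
      rw [eq_div_iff hdw.ne']; exact hfoc
    have hνg : ν * g (wstar ν) = g (wstar ν) / deriv g (wstar ν) := by
      rw [eq_div_iff hdw.ne']; linear_combination g (wstar ν) * hfoc
    have harg : wstar ν - g (wstar ν) / deriv g (wstar ν) ≤ α + M ν := by
      have hMe : M ν = wstar ν - ν * g (wstar ν) := rfl
      rw [hMe, hνg]; linarith
    have hargnn : 0 ≤ wstar ν - g (wstar ν) / deriv g (wstar ν) := by
      have := hGle _ hwpos; linarith
    have hgle : g (wstar ν - g (wstar ν) / deriv g (wstar ν)) ≤ g (α + M ν) :=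
      hgmono.monotoneOn (Set.mem_Ici.mpr hargnn)
        (Set.mem_Ici.mpr (hApos ν hνpos).le) harg
    show g (wstar ν - g (wstar ν) / deriv g (wstar ν)) / deriv g (wstar ν) ≤ ν * g (α + M ν)
    have hrw : ν * g (α + M ν) = g (α + M ν) / deriv g (wstar ν) := by
      rw [eq_div_iff hdw.ne']; linear_combination g (α + M ν) * hfoc
    rw [hrw]
    gcongr
  -- continuity of F₀ on Ioi 0
  have hF₀cont : ∀ ν : ℝ, 0 < ν → ContinuousAt F₀ ν := by
    intro ν hν
    exact (hF₀d ν hν).continuousAt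
  -- existence of w₀ with G w₀ = α
  have hGcont : ContinuousOn (fun w => g w / deriv g w) (Set.Ioi 0) :=
    hgc.continuousOn.div hg'c.continuousOn fun w hw => (hg'pos w hw).ne'
  have hexw₀ : ∃ w₀ : ℝ, 0 < w₀ ∧ g w₀ / deriv g w₀ = α := by
    by_contra hno
    push_neg at hno
    have hlt : ∀ w : ℝ, 0 < w → g w / deriv g w < α := by
      intro w hw
      rcases lt_trichotomy (g w / deriv g w) α with h | h | h
      · exact h
      · exact absurd h (hno w hw)
      · exfalso
        set w₂ : ℝ := min (α/2) (w/2) with hw₂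
        have hw₂pos : 0 < w₂ := lt_min (by linarith) (by linarith)
        have hw₂lt : w₂ < w := (min_le_right _ _).trans_lt (by linarith)
        have hG₂ : g w₂ / deriv g w₂ < α :=
          lt_of_le_of_lt (hGle w₂ hw₂pos) ((min_le_left _ _).trans_lt (by linarith))
        have hcont : ContinuousOn (fun w => g w / deriv g w) (Set.Icc w₂ w) :=
          hGcont.mono fun x hx => Set.mem_Ioi.mpr (lt_of_lt_of_le hw₂pos hx.1)
        have := intermediate_value_Icc hw₂lt.le hcont
        have hmem : α ∈ Set.Icc (g w₂ / deriv g w₂) (g w / deriv g w) := ⟨hG₂.le, h.le⟩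
        obtain ⟨w₀, hw₀mem, hw₀⟩ := this hmem
        exact hno w₀ (lt_of_lt_of_le hw₂pos hw₀mem.1) hw₀
    -- F₀ strictly monotone on Ioi 0, contradicting blow-up at 0
    have hmono : StrictMonoOn F₀ (Set.Ioi 0) := by
      apply strictMonoOn_of_deriv_pos (convex_Ioi 0)
      · intro x hx; exact (hF₀cont x hx).continuousWithinAt
      · intro x hx
        rw [interior_Ioi] at hx
        rw [(hF₀d x hx).deriv]
        exact (hkey x hx).1 (hlt _ (hws x hx).1)
    have h1 : ∀ᶠ ν in 𝓝[>] (0:ℝ), F₀ 1 < F₀ ν := hlim_zero.eventually_gt_atTop (F₀ 1)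
    have h2 : ∀ᶠ ν in 𝓝[>] (0:ℝ), ν < 1 :=
      eventually_nhdsWithin_of_eventually_nhds (eventually_lt_nhds one_pos)
    obtain ⟨ν, ⟨hν1, hν2⟩, hν3⟩ := ((h1.and h2).and self_mem_nhdsWithin).exists
    have := hmono hν3 (Set.mem_Ioi.mpr one_pos) hν2
    linarith
  obtain ⟨w₀, hw₀pos, hw₀G⟩ := hexw₀
  have hdw₀ : 0 < deriv g w₀ := hg'pos _ hw₀pos
  set ν₀ : ℝ := 1 / deriv g w₀ with hν₀def
  have hν₀pos : 0 < ν₀ := by positivity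
  have hwν₀ : wstar ν₀ = w₀ := hinv w₀ hw₀pos
  have hMν₀ : M ν₀ = w₀ - α := by
    show wstar ν₀ - ν₀ * g (wstar ν₀) = w₀ - α
    rw [hwν₀, hν₀def, one_div, inv_mul_eq_div, hw₀G]
  have hF₀ν₀ : F₀ ν₀ = α := by
    show ν₀ * g (α + M ν₀) = α
    rw [hMν₀, show α + (w₀ - α) = w₀ by ring, hν₀def, one_div, inv_mul_eq_div, hw₀G]
  have hαC : α < α * C := by nlinarith
  have hup : StrictMonoOn F₀ (Set.Ici ν₀) := by
    apply strictMonoOn_of_deriv_pos (convex_Ici ν₀)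
    · intro x hx; exact (hF₀cont x (lt_of_lt_of_le hν₀pos hx)).continuousWithinAt
    · intro x hx
      rw [interior_Ici] at hx
      have hxpos : 0 < x := hν₀pos.trans hx
      rw [(hF₀d x hxpos).deriv]
      apply (hkey x hxpos).1
      have hwlt : wstar x < w₀ := by
        have := hanti (Set.mem_Ioi.mpr hν₀pos) (Set.mem_Ioi.mpr hxpos) hx
        rwa [hwν₀] at this
      have := hlog (Set.mem_Ioi.mpr (hws x hxpos).1) (Set.mem_Ioi.mpr hw₀pos) hwlt
      simp only at this
      rwa [hw₀G] at this
  have hdown : StrictAntiOn F₀ (Set.Ioc 0 ν₀) := by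
    apply strictAntiOn_of_deriv_neg (convex_Ioc 0 ν₀)
    · intro x hx; exact (hF₀cont x hx.1).continuousWithinAt
    · intro x hx
      rw [interior_Ioc] at hx
      rw [(hF₀d x hx.1).deriv]
      apply (hkey x hx.1).2
      have hwgt : w₀ < wstar x := by
        have := hanti (Set.mem_Ioi.mpr hx.1) (Set.mem_Ioi.mpr hν₀pos) hx.2
        rwa [hwν₀] at this
      have := hlog (Set.mem_Ioi.mpr hw₀pos) (Set.mem_Ioi.mpr (hws x hx.1).1) hwgt
      simp only at this
      rwa [hw₀G] at this
  obtain ⟨b, hb1, hb2⟩ :=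
    ((hlim_top.eventually_gt_atTop (α * C)).and (eventually_gt_atTop ν₀)).exists
  have hcont2 : ContinuousOn F₀ (Set.Icc ν₀ b) := fun x hx =>
    (hF₀cont x (lt_of_lt_of_le hν₀pos hx.1)).continuousWithinAt
  obtain ⟨ν₂, hν₂mem, hν₂⟩ := intermediate_value_Icc hb2.le hcont2
    ⟨by rw [hF₀ν₀]; exact hαC.le, hb1.le⟩
  have hν₂gt : ν₀ < ν₂ := by
    rcases hν₂mem.1.lt_or_eq with h | h
    · exact h
    · exfalso; rw [← h, hF₀ν₀] at hν₂; linarith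
  have ha1 : ∀ᶠ ν in 𝓝[>] (0:ℝ), α * C < F₀ ν := hlim_zero.eventually_gt_atTop _
  have ha2 : ∀ᶠ ν in 𝓝[>] (0:ℝ), ν < ν₀ :=
    eventually_nhdsWithin_of_eventually_nhds (eventually_lt_nhds hν₀pos)
  obtain ⟨a, ⟨haC, halt⟩, hapos⟩ := ((ha1.and ha2).and self_mem_nhdsWithin).exists
  have hapos' : (0:ℝ) < a := hapos
  have hcont1 : ContinuousOn F₀ (Set.Icc a ν₀) := fun x hx =>
    (hF₀cont x (lt_of_lt_of_le hapos' hx.1)).continuousWithinAt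
  obtain ⟨ν₁, hν₁mem, hν₁⟩ := intermediate_value_Icc' halt.le hcont1
    ⟨by rw [hF₀ν₀]; exact hαC.le, haC.le⟩
  have hν₁pos : 0 < ν₁ := lt_of_lt_of_le hapos' hν₁mem.1
  have hν₁lt : ν₁ < ν₀ := by
    rcases hν₁mem.2.lt_or_eq with h | h
    · exact h
    · exfalso; rw [h, hF₀ν₀] at hν₁; linarith
  refine ⟨ν₁, ν₂, hν₁pos, hν₁lt.trans hν₂gt, ?_, ?_, ?_⟩
  · rw [hFeq ν₁ hν₁pos]; exact hν₁
  · rw [hFeq ν₂ (hν₀pos.trans hν₂gt)]; exact hν₂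
  · intro ν hν hFν
    rw [hFeq ν hν] at hFν
    rcases le_or_gt ν ν₀ with h | h
    · left
      exact hdown.injOn ⟨hν, h⟩ ⟨hν₁pos, hν₁lt.le⟩ (by rw [hFν, hν₁])
    · right
      exact hup.injOn (Set.mem_Ici.mpr h.le) (Set.mem_Ici.mpr hν₂gt.le) (by rw [hFν, hν₂])
end

section
/- Let g(w) = w^β with β > 1, α > 0, C > 1, and ν > 0. Then ν · g(α + max_{w≥0}(w - ν g(w))) > αC holds if and only if ν^{-1/(β(β-1))} · (β^{-1/(β-1)} - β^{-β/(β-1)}) · α^{-1/β} + ν^{1/β} · α^{(β-1)/β} > C^{1/β}. -/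
open Real

/-- Closed-form disintermediation condition for power cost functions:
`ν·(α + max_{w≥0}(w - ν w^β))^β > αC` holds iff
`ν^{-1/(β(β-1))}(β^{-1/(β-1)} - β^{-β/(β-1)})α^{-1/β} + ν^{1/β} α^{(β-1)/β} > C^{1/β}`. -/
theorem stmt9 (β α C ν : ℝ) (hβ : 1 < β) (hα : 0 < α) (hC : 1 < C) (hν : 0 < ν)
    (V : ℝ) (hV : IsGreatest ((fun w : ℝ => w - ν * w ^ β) '' Set.Ici 0) V) :
    ν * (α + V) ^ β > α * C ↔
      ν ^ (-(1 / (β * (β - 1)))) * (β ^ (-(1 / (β - 1))) - β ^ (-(β / (β - 1))))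
          * α ^ (-(1 / β)) + ν ^ (1 / β) * α ^ ((β - 1) / β) > C ^ (1 / β) := by
  have hb : (0:ℝ) < β := lt_trans one_pos hβ
  have hb1 : (0:ℝ) < β - 1 := by linarith
  have hνβ : (0:ℝ) < ν * β := mul_pos hν hb
  set W : ℝ := (ν * β) ^ (-(1 / (β - 1))) with hWdef
  have hW : 0 < W := rpow_pos_of_pos hνβ _
  have hWpow : W ^ (β - 1) = (ν * β)⁻¹ := by
    rw [hWdef, ← Real.rpow_mul hνβ.le,
      show (-(1 / (β - 1))) * (β - 1) = -1 by field_simp, Real.rpow_neg_one]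
  have hcrit : ν * W ^ (β - 1) = 1 / β := by
    rw [hWpow]; field_simp
  have hfW : W - ν * W ^ β = W * (1 - 1 / β) := by
    have h : W ^ β = W ^ (β - 1 + 1) := by norm_num
    rw [h, Real.rpow_add hW, Real.rpow_one,
      show ν * (W ^ (β - 1) * W) = ν * W ^ (β - 1) * W by ring, hcrit]
    ring
  -- upper bound via Young's inequality
  have hub : ∀ w : ℝ, 0 ≤ w → w - ν * w ^ β ≤ W * (1 - 1 / β) := by
    intro w hw
    set c : ℝ := (ν * β) ^ (1 / β) with hcdef
    have hc : 0 < c := rpow_pos_of_pos hνβ _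
    have hpq : β.HolderConjugate (β / (β - 1)) := Real.HolderConjugate.conjExponent hβ
    have hY := Real.young_inequality_of_nonneg (mul_nonneg hw hc.le)
      (inv_nonneg.mpr hc.le) hpq
    have h1 : w * c * c⁻¹ = w := by field_simp
    have hcb : c ^ β = ν * β := by
      rw [hcdef, ← Real.rpow_mul hνβ.le, one_div, inv_mul_cancel₀ hb.ne', Real.rpow_one]
    have h2 : (w * c) ^ β / β = ν * w ^ β := by
      rw [Real.mul_rpow hw hc.le, hcb]; field_simp
    have hcinv : c⁻¹ = (ν * β) ^ (-(1 / β)) := by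
      rw [hcdef, ← Real.rpow_neg hνβ.le]
    have h3 : (c⁻¹) ^ (β / (β - 1)) / (β / (β - 1)) = W * (1 - 1 / β) := by
      rw [hcinv, ← Real.rpow_mul hνβ.le,
        show (-(1 / β)) * (β / (β - 1)) = -(1 / (β - 1)) by field_simp, ← hWdef]
      field_simp
    rw [h1, h2, h3] at hY
    linarith
  have hVeq : V = W * (1 - 1 / β) := by
    obtain ⟨⟨w, hw, hfw⟩, hub'⟩ := hV
    refine le_antisymm ?_ (hub' ⟨W, hW.le, hfW⟩)
    rw [← hfw]; exact hub w hw
  have h1β : (0:ℝ) < 1 - 1 / β := by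
    rw [sub_pos, div_lt_one hb]; exact hβ
  have hVpos : 0 < V := hVeq ▸ mul_pos hW h1β
  have hαV : 0 < α + V := by linarith
  have hβinv : (0:ℝ) < 1 / β := by positivity
  set E : ℝ := ν ^ (-(1 / (β * (β - 1)))) * (β ^ (-(1 / (β - 1))) - β ^ (-(β / (β - 1))))
      * α ^ (-(1 / β)) + ν ^ (1 / β) * α ^ ((β - 1) / β) with hEdef
  -- key identity
  have eW : W = ν ^ (-(1 / (β - 1))) * β ^ (-(1 / (β - 1))) := by
    rw [hWdef, Real.mul_rpow hν.le hb.le]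
  have eνν : ν ^ (1 / β) * ν ^ (-(1 / (β - 1))) = ν ^ (-(1 / (β * (β - 1)))) := by
    rw [← Real.rpow_add hν]; congr 1; field_simp; ring
  have eβ : β ^ (-(1 / (β - 1))) * (1 - 1 / β) = β ^ (-(1 / (β - 1))) - β ^ (-(β / (β - 1))) := by
    have h : β ^ (-(β / (β - 1))) = β ^ (-(1 / (β - 1))) * β⁻¹ := by
      rw [← Real.rpow_neg_one β, ← Real.rpow_add hb]; congr 1; field_simp; ring
    rw [h, one_div]; ring
  have e1 : α ^ (-(1 / β)) * α ^ (1 / β) = 1 := by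
    rw [← Real.rpow_add hα, neg_add_cancel, Real.rpow_zero]
  have e2 : α ^ ((β - 1) / β) * α ^ (1 / β) = α := by
    rw [← Real.rpow_add hα, show (β - 1) / β + 1 / β = 1 by field_simp; ring, Real.rpow_one]
  have hνV : ν ^ (1 / β) * V = ν ^ (-(1 / (β * (β - 1)))) *
      (β ^ (-(1 / (β - 1))) - β ^ (-(β / (β - 1)))) := by
    rw [hVeq, eW, ← eβ, ← eνν]; ring
  have hkey : E * α ^ (1 / β) = ν ^ (1 / β) * (α + V) := by
    rw [hEdef]
    have : (ν ^ (-(1 / (β * (β - 1)))) * (β ^ (-(1 / (β - 1))) - β ^ (-(β / (β - 1))))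
        * α ^ (-(1 / β)) + ν ^ (1 / β) * α ^ ((β - 1) / β)) * α ^ (1 / β)
        = ν ^ (-(1 / (β * (β - 1)))) * (β ^ (-(1 / (β - 1))) - β ^ (-(β / (β - 1))))
          * (α ^ (-(1 / β)) * α ^ (1 / β)) + ν ^ (1 / β) * (α ^ ((β - 1) / β) * α ^ (1 / β)) := by
      ring
    rw [this, e1, e2, ← hνV]; ring
  -- main chain
  have step1 : (α * C < ν * (α + V) ^ β) ↔
      ((α * C) ^ (1 / β) < (ν * (α + V) ^ β) ^ (1 / β)) :=
    (Real.rpow_lt_rpow_iff (by positivity) (by positivity) hβinv).symm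
  have simpL : (ν * (α + V) ^ β) ^ (1 / β) = ν ^ (1 / β) * (α + V) := by
    rw [Real.mul_rpow hν.le (Real.rpow_nonneg hαV.le β), ← Real.rpow_mul hαV.le,
      mul_one_div_cancel hb.ne', Real.rpow_one]
  have simpR : (α * C) ^ (1 / β) = α ^ (1 / β) * C ^ (1 / β) :=
    Real.mul_rpow hα.le (by linarith)
  have step2 : (α ^ (1 / β) * C ^ (1 / β) < ν ^ (1 / β) * (α + V)) ↔ (C ^ (1 / β) < E) := by
    rw [← hkey, mul_comm (α ^ (1 / β)) (C ^ (1 / β))]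
    exact mul_lt_mul_iff_of_pos_right (rpow_pos_of_pos hα _)
  show α * C < ν * (α + V) ^ β ↔ C ^ (1 / β) < E
  rw [step1, simpL, simpR, step2]
end

section
/- Let g(w) = w^β·e^w with β > 1. Then lim_{w → ∞} g(α + w - g(w)/g'(w))/g'(w) ≤ e^α for any α > 0. Consequently, if α > 1 and C > 1 satisfy e^α < αC, then lim_{ν → 0+} ν·g(α + max_{w≥0}(w - ν g(w))) ≤ e^α < αC, so the disintermediation condition fails for all sufficiently small ν > 0. -/
open Real Filter Topology

/-- For `g(w) = w^β e^w` with `β > 1`: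
`limsup_{w→∞} g(a + w - g(w)/g'(w))/g'(w) ≤ e^a` for every `a > 0`; consequently,
if `α > 1` and `C > 1` satisfy `e^α < αC`, then
`ν · g(α + max_{w≥0}(w - ν g(w))) < αC` for all sufficiently small `ν > 0`. -/
theorem stmt14 (β α C : ℝ) (hβ : 1 < β) (hα : 1 < α) (hC : 1 < C)
    (hcond : Real.exp α < α * C)
    (g : ℝ → ℝ) (hg : ∀ w : ℝ, g w = w ^ β * Real.exp w)
    (Vf : ℝ → ℝ)
    (hVf : ∀ ν : ℝ, 0 < ν →
      IsGreatest ((fun w : ℝ => w - ν * g w) '' Set.Ici 0) (Vf ν)) :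
    (∀ a : ℝ, 0 < a →
      limsup (fun w => g (a + w - g w / deriv g w) / deriv g w) atTop ≤ Real.exp a) ∧
    limsup (fun ν => ν * g (α + Vf ν)) (nhdsWithin 0 (Set.Ioi 0)) ≤ Real.exp α ∧
    ∃ ε : ℝ, 0 < ε ∧ ∀ ν : ℝ, 0 < ν → ν < ε → ν * g (α + Vf ν) < α * C := by
  have hβ0 : (0:ℝ) < β := lt_trans one_pos hβ
  have hα0 : (0:ℝ) < α := lt_trans one_pos hα
  have hgfun : g = fun w => w ^ β * Real.exp w := funext hg
  have hderiv : ∀ w : ℝ, deriv g w = (β * w ^ (β-1) + w ^ β) * Real.exp w := by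
    intro w
    have h1 : HasDerivAt (fun x : ℝ => x ^ β * Real.exp x)
        (β * w ^ (β-1) * Real.exp w + w ^ β * Real.exp w) w :=
      (Real.hasDerivAt_rpow_const (Or.inr hβ.le)).mul (Real.hasDerivAt_exp w)
    rw [hgfun, h1.deriv]; ring
  -- Part 1
  have part1 : ∀ a : ℝ, 0 < a →
      limsup (fun w => g (a + w - g w / deriv g w) / deriv g w) atTop ≤ Real.exp a := by
    intro a ha
    set h : ℝ → ℝ := fun w =>
      ((a + w - w/(β+w))/w) ^ β * (w/(β+w)) * (Real.exp a * Real.exp (-(w/(β+w)))) with hh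
    have heq : (fun w => g (a + w - g w / deriv g w) / deriv g w) =ᶠ[atTop] h := by
      filter_upwards [eventually_ge_atTop 1] with w hw1
      have hw0 : (0:ℝ) < w := lt_of_lt_of_le one_pos hw1
      have hbw : (0:ℝ) < β + w := by linarith
      have hwb : w ^ β = w ^ (β-1) * w := by
        rw [← Real.rpow_add_one hw0.ne' (β-1)]; ring_nf
      have h1 : w ^ (β-1) ≠ 0 := (Real.rpow_pos_of_pos hw0 _).ne'
      have h2 : Real.exp w ≠ 0 := (Real.exp_pos w).ne'
      have hratio : g w / deriv g w = w / (β + w) := by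
        rw [hg, hderiv, hwb]
        field_simp
      have hfrac : w / (β + w) < 1 := (div_lt_one hbw).mpr (by linarith)
      have hu : 0 < a + w - w/(β+w) := by linarith
      rw [hratio, hg, hderiv]
      show _ = ((a + w - w/(β+w))/w) ^ β * (w/(β+w)) * (Real.exp a * Real.exp (-(w/(β+w))))
      rw [Real.div_rpow hu.le hw0.le]
      have hexp : Real.exp a * Real.exp (-(w/(β+w)))
          = Real.exp (a + w - w/(β+w)) / Real.exp w := by
        rw [← Real.exp_add, ← Real.exp_sub]; ring_nf
      rw [hexp, hwb]
      field_simp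
    have T0 : Tendsto (fun w:ℝ => β + w) atTop atTop :=
      tendsto_atTop_add_const_left atTop β tendsto_id
    have T1 : Tendsto (fun w:ℝ => w/(β+w)) atTop (𝓝 1) := by
      have h2 : Tendsto (fun w:ℝ => 1 - β/(β+w)) atTop (𝓝 (1-0)) :=
        tendsto_const_nhds.sub (tendsto_const_nhds.div_atTop T0)
      norm_num at h2
      refine Tendsto.congr' ?_ h2
      filter_upwards [eventually_ge_atTop 1] with w hw1
      have hbw : (0:ℝ) < β + w := by linarith
      field_simp
      ring
    have Tu : Tendsto (fun w:ℝ => (a + w - w/(β+w))/w) atTop (𝓝 1) := by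
      have h2 : Tendsto (fun w:ℝ => a/w + (1 - 1/(β+w))) atTop (𝓝 (0 + (1-0))) :=
        (tendsto_const_nhds.div_atTop tendsto_id).add
          (tendsto_const_nhds.sub (tendsto_const_nhds.div_atTop T0))
      norm_num at h2
      refine Tendsto.congr' ?_ h2
      filter_upwards [eventually_ge_atTop 1] with w hw1
      have hw0 : (0:ℝ) < w := lt_of_lt_of_le one_pos hw1
      have hbw : (0:ℝ) < β + w := by linarith
      field_simp
      ring
    have Trpow : Tendsto (fun w:ℝ => ((a + w - w/(β+w))/w) ^ β) atTop (𝓝 1) := by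
      have hc := (Real.continuousAt_rpow_const 1 β (Or.inl one_ne_zero)).tendsto.comp Tu
      simpa [Function.comp_def, Real.one_rpow] using hc
    have Texp : Tendsto (fun w:ℝ => Real.exp (-(w/(β+w)))) atTop (𝓝 (Real.exp (-1))) :=
      (Real.continuous_exp.continuousAt.tendsto).comp T1.neg
    have Th : Tendsto h atTop (𝓝 (1 * 1 * (Real.exp a * Real.exp (-1)))) :=
      (Trpow.mul T1).mul (tendsto_const_nhds.mul Texp)
    have Torig := Th.congr' heq.symm
    rw [Torig.limsup_eq]
    rw [one_mul, one_mul, ← Real.exp_add]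
    exact Real.exp_le_exp.mpr (by linarith)
  refine ⟨part1, ?_⟩
  -- setup for parts 2 and 3
  have hg0 : g 0 = 0 := by
    rw [hg, Real.zero_rpow hβ0.ne']; ring
  set w₁ : ℝ := β * α + 1 with hw₁
  have hw₁pos : 0 < w₁ := by nlinarith
  have hgw₁pos : 0 < g w₁ := by
    rw [hg]; exact mul_pos (Real.rpow_pos_of_pos hw₁pos β) (Real.exp_pos _)
  set ε₀ : ℝ := 1 / g w₁ with hε₀
  have hε₀pos : 0 < ε₀ := by positivity
  have key : ∀ ν : ℝ, 0 < ν → ν < ε₀ → ν * g (α + Vf ν) ≤ Real.exp α := by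
    intro ν hν hνε
    set V := Vf ν with hV
    have hub : ∀ w : ℝ, 0 ≤ w → w - ν * g w ≤ V := by
      intro w hw
      exact (hVf ν hν).2 ⟨w, hw, rfl⟩
    have hνg1 : ν * g w₁ < 1 := by
      exact (lt_div_iff₀ hgw₁pos).mp hνε
    have hVlb : β * α < V := by
      have := hub w₁ hw₁pos.le
      nlinarith
    have hVpos : 0 < V := lt_trans (mul_pos hβ0 hα0) hVlb
    obtain ⟨w₀, hw₀mem, hw₀eq⟩ := (hVf ν hν).1
    simp only [Set.mem_Ici] at hw₀mem
    simp only at hw₀eq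
    have hgw₀ : 0 ≤ g w₀ := by
      rw [hg]; exact mul_nonneg (Real.rpow_nonneg hw₀mem β) (Real.exp_pos _).le
    set t₀ : ℝ := w₀ - V with ht₀
    have hνgw₀ : ν * g w₀ = t₀ := by
      simp only [ht₀]; linarith [hw₀eq]
    have ht₀0 : 0 ≤ t₀ := by rw [← hνgw₀]; positivity
    have hw₀V : V ≤ w₀ := by linarith
    have hw₀pos : 0 < w₀ := lt_of_lt_of_le hVpos hw₀V
    have hαV : 0 < α + V := by linarith
    -- key identity
    have hident : ν * g (α + V) = t₀ * ((α+V)/w₀)^β * Real.exp (α - t₀) := by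
      have h2 : Real.exp (α - t₀) = Real.exp (α + V) / Real.exp w₀ := by
        rw [← Real.exp_sub, ht₀]; ring_nf
      rw [hg (α+V), Real.div_rpow hαV.le hw₀pos.le, h2, ← hνgw₀, hg w₀]
      have h3 : w₀ ^ β ≠ 0 := (Real.rpow_pos_of_pos hw₀pos β).ne'
      have h4 : Real.exp w₀ ≠ 0 := (Real.exp_pos w₀).ne'
      field_simp
    -- bound factor 1 : t₀ * exp (α - t₀) ≤ exp (α - 1)
    have b1 : t₀ * Real.exp (α - t₀) ≤ Real.exp (α - 1) := by
      have h5 : t₀ ≤ Real.exp (t₀ - 1) := by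
        have := Real.add_one_le_exp (t₀ - 1); linarith
      calc t₀ * Real.exp (α - t₀) ≤ Real.exp (t₀ - 1) * Real.exp (α - t₀) :=
            mul_le_mul_of_nonneg_right h5 (Real.exp_pos _).le
        _ = Real.exp (α - 1) := by rw [← Real.exp_add]; ring_nf
    -- bound factor 2 : ((α+V)/w₀)^β ≤ exp 1
    have b2 : ((α+V)/w₀)^β ≤ Real.exp 1 := by
      have h6 : (α+V)/w₀ ≤ 1 + α/w₀ := by
        rw [div_le_iff₀ hw₀pos]
        have hmul : (1 + α/w₀) * w₀ = w₀ + α := by field_simp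
        rw [hmul]
        linarith
      have h7 : 1 + α/w₀ ≤ Real.exp (α/w₀) := by
        have := Real.add_one_le_exp (α/w₀); linarith
      have h8 : ((α+V)/w₀)^β ≤ (Real.exp (α/w₀))^β :=
        Real.rpow_le_rpow (by positivity) (le_trans h6 h7) hβ0.le
      have h9 : (Real.exp (α/w₀))^β = Real.exp (α/w₀ * β) := (Real.exp_mul _ _).symm
      have h10 : α/w₀ * β ≤ 1 := by
        rw [div_mul_eq_mul_div, div_le_one hw₀pos]
        nlinarith [hVlb, hw₀V, mul_pos hβ0 hα0]
      calc ((α+V)/w₀)^β ≤ Real.exp (α/w₀ * β) := by rw [← h9]; exact h8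
        _ ≤ Real.exp 1 := Real.exp_le_exp.mpr h10
    calc ν * g (α + V) = (t₀ * Real.exp (α - t₀)) * ((α+V)/w₀)^β := by rw [hident]; ring
      _ ≤ Real.exp (α - 1) * Real.exp 1 := by
          apply mul_le_mul b1 b2 (by positivity) (Real.exp_pos _).le
      _ = Real.exp α := by rw [← Real.exp_add]; ring_nf
  constructor
  · -- limsup part
    have hev : ∀ᶠ ν in nhdsWithin 0 (Set.Ioi 0), ν * g (α + Vf ν) ≤ Real.exp α := by
      filter_upwards [Ioo_mem_nhdsGT_of_mem (Set.mem_Ico.mpr ⟨le_refl (0:ℝ), hε₀pos⟩)]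
        with ν hν
      exact key ν hν.1 hν.2
    haveI : (nhdsWithin (0:ℝ) (Set.Ioi 0)).NeBot := nhdsGT_neBot 0
    refine limsup_le_of_le ?_ hev
    apply isCoboundedUnder_le_of_eventually_le (nhdsWithin (0:ℝ) (Set.Ioi 0)) (x := 0)
    filter_upwards [self_mem_nhdsWithin] with ν hν
    have hν0 : 0 < ν := hν
    have hub : (0:ℝ) - ν * g 0 ≤ Vf ν := (hVf ν hν0).2 ⟨0, Set.mem_Ici.mpr (le_refl 0), rfl⟩
    rw [hg0] at hub
    have hVf0 : 0 ≤ Vf ν := by linarith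
    have : 0 ≤ g (α + Vf ν) := by
      rw [hg]; exact mul_nonneg (Real.rpow_nonneg (by linarith) β) (Real.exp_pos _).le
    positivity
  · exact ⟨ε₀, hε₀pos, fun ν h1 h2 => lt_of_le_of_lt (key ν h1 h2) hcond⟩
end

section
/- Let g be continuously differentiable, strictly convex, strictly log-concave, with g(0)=g'(0)=0 and g'(w)→∞. For fixed α > 0 and C ≥ 1, consider ν at which the intermediary's utility αC - ν·g(α + max_{w≥0}(w - ν g(w))) is maximized over ν > 0 (assuming the sufficient condition lim_{w→∞} g(w - g(w)/g'(w))/g'(w) = ∞). Then the maximum utility equals α(C - 1), and at the maximizing ν the quality α + max_{w≥0}(w - ν g(w)) equals the consumer's own optimal quality argmax_{w≥0}(w - ν g(w)). -/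
open Filter

section aux

variable {g : ℝ → ℝ}

lemma stmt15_tangent (hg : ContDiff ℝ 1 g) (hsc : StrictConvexOn ℝ (Set.Ici (0 : ℝ)) g)
    {w x : ℝ} (hw : 0 ≤ w) (hx : 0 ≤ x) :
    g w + deriv g w * (x - w) ≤ g x := by
  have hdiff : ∀ y : ℝ, DifferentiableAt ℝ g y :=
    fun y => (hg.differentiable one_ne_zero).differentiableAt
  rcases lt_trichotomy x w with h | h | h
  · have h1 := hsc.convexOn.slope_le_deriv (Set.mem_Ici.2 hx) (Set.mem_Ici.2 hw) h (hdiff w)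
    rw [slope_def_field] at h1
    have h2 : (0:ℝ) < w - x := by linarith
    rw [div_le_iff₀ h2] at h1
    nlinarith
  · simp [h]
  · have h1 := hsc.convexOn.deriv_le_slope (Set.mem_Ici.2 hw) (Set.mem_Ici.2 hx) h (hdiff w)
    rw [slope_def_field] at h1
    have h2 : (0:ℝ) < x - w := by linarith
    rw [le_div_iff₀ h2] at h1
    nlinarith

end aux

/-- The intermediary's utility `U(ν) = αC - ν·g(α + max_{w≥0}(w - ν g(w)))` attains
its maximum over `ν > 0`, the maximal utility equals `α(C - 1)`, and at the
maximizing `ν` the quality `α + max_{w≥0}(w - ν g(w))` equals the consumer's own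
optimal quality `w*(ν)`. -/
theorem stmt15 (g : ℝ → ℝ) (hg : ContDiff ℝ 1 g)
    (hsc : StrictConvexOn ℝ (Set.Ici (0 : ℝ)) g)
    (h0 : g 0 = 0) (h0' : deriv g 0 = 0)
    (hg'inf : Tendsto (deriv g) atTop atTop)
    (hlog : StrictMonoOn (fun w => g w / deriv g w) (Set.Ioi 0))
    (hsuff : Tendsto (fun w => g (w - g w / deriv g w) / deriv g w) atTop atTop)
    (α C : ℝ) (hα : 0 < α) (hC : 1 ≤ C)
    (wstar : ℝ → ℝ)
    (hmax : ∀ ν : ℝ, 0 < ν → 0 ≤ wstar ν ∧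
      IsMaxOn (fun x => x - ν * g x) (Set.Ici 0) (wstar ν))
    (huniq : ∀ ν : ℝ, 0 < ν → ∀ w : ℝ, 0 ≤ w →
      IsMaxOn (fun x => x - ν * g x) (Set.Ici 0) w → w = wstar ν)
    (U : ℝ → ℝ)
    (hU : ∀ ν : ℝ, 0 < ν →
      U ν = α * C - ν * g (α + (wstar ν - ν * g (wstar ν)))) :
    ∃ ν₀ : ℝ, 0 < ν₀ ∧ (∀ ν : ℝ, 0 < ν → U ν ≤ U ν₀) ∧
      U ν₀ = α * (C - 1) ∧
      α + (wstar ν₀ - ν₀ * g (wstar ν₀)) = wstar ν₀ := by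
  have hdiff : ∀ y : ℝ, DifferentiableAt ℝ g y :=
    fun y => (hg.differentiable one_ne_zero).differentiableAt
  -- positivity of g and g' on (0, ∞)
  have hgpos : ∀ w : ℝ, 0 < w → 0 < g w := by
    intro w hw
    have h1 := hsc.deriv_lt_slope (Set.mem_Ici.2 le_rfl) (Set.mem_Ici.2 hw.le) hw (hdiff 0)
    rw [slope_def_field, h0', h0] at h1
    have := (div_pos_iff.1 (by simpa using h1))
    rcases this with ⟨h2, _⟩ | ⟨_, h3⟩
    · linarith
    · linarith
  have hg'pos : ∀ w : ℝ, 0 < w → 0 < deriv g w := by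
    intro w hw
    have h1 := hsc.slope_lt_deriv (Set.mem_Ici.2 le_rfl) (Set.mem_Ici.2 hw.le) hw (hdiff w)
    rw [slope_def_field, h0] at h1
    have h2 : 0 < g w / w := div_pos (hgpos w hw) hw
    have h3 : (g w - 0) / (w - 0) = g w / w := by ring_nf
    rw [h3] at h1
    linarith
  have hglt : ∀ w : ℝ, 0 < w → g w < w * deriv g w := by
    intro w hw
    have h1 := hsc.slope_lt_deriv (Set.mem_Ici.2 le_rfl) (Set.mem_Ici.2 hw.le) hw (hdiff w)
    rw [slope_def_field, h0] at h1
    have h3 : (g w - 0) / (w - 0) = g w / w := by ring_nf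
    rw [h3, div_lt_iff₀ hw] at h1
    linarith
  have hg'nonneg : ∀ w : ℝ, 0 ≤ w → 0 ≤ deriv g w := by
    intro w hw
    rcases eq_or_lt_of_le hw with h | h
    · rw [← h, h0']
    · exact (hg'pos w h).le
  have hmono : ∀ u v : ℝ, 0 ≤ u → u ≤ v → g u ≤ g v := by
    intro u v hu huv
    have := stmt15_tangent hg hsc hu (le_trans hu huv)
    nlinarith [hg'nonneg u hu]
  -- For each w > 0, w is the consumer's optimum at ν = 1 / g'(w)
  have hws : ∀ w : ℝ, 0 < w → wstar (1 / deriv g w) = w := by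
    intro w hw
    have hd := hg'pos w hw
    have hν : 0 < 1 / deriv g w := by positivity
    refine (huniq _ hν w hw.le ?_).symm
    apply isMaxOn_iff.mpr
    intro x hx
    have ht := stmt15_tangent hg hsc hw.le (Set.mem_Ici.1 hx)
    have key : (1 / deriv g w) * (deriv g w * (x - w)) ≤ (1 / deriv g w) * (g x - g w) :=
      mul_le_mul_of_nonneg_left (by linarith) hν.le
    have hsimp : (1 / deriv g w) * (deriv g w * (x - w)) = x - w := by
      field_simp
    rw [hsimp] at key
    show x - 1 / deriv g w * g x ≤ w - 1 / deriv g w * g w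
    linarith
  -- IVT on h(w) = g(w)/g'(w) to find w₀ with h(w₀) = α
  set h : ℝ → ℝ := fun w => g w / deriv g w with hh
  have hhlt : ∀ w : ℝ, 0 < w → h w < w := by
    intro w hw
    have hd := hg'pos w hw
    rw [hh]
    dsimp only
    rw [div_lt_iff₀ hd]
    have := hglt w hw
    nlinarith
  have hhnn : ∀ w : ℝ, 0 < w → 0 ≤ h w := fun w hw =>
    div_nonneg (hgpos w hw).le (hg'pos w hw).le
  have hhtop : Tendsto h atTop atTop := by
    apply tendsto_atTop_mono' atTop _ hsuff
    filter_upwards [eventually_gt_atTop (0:ℝ)] with w hw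
    have hd := hg'pos w hw
    have h1 : 0 ≤ w - h w := by linarith [hhlt w hw]
    have h2 : g (w - g w / deriv g w) ≤ g w := hmono _ w h1 (by
      have := hhnn w hw
      simp only [hh] at this ⊢
      linarith)
    exact div_le_div_of_nonneg_right h2 hd.le |>.trans_eq rfl
  obtain ⟨b, hb1, hb2⟩ := ((hhtop.eventually_ge_atTop α).and (eventually_ge_atTop (α + 1))).exists
  have hab : α ≤ b := by linarith
  have hcont : ContinuousOn h (Set.Icc α b) := by
    apply ContinuousOn.div (hg.continuous.continuousOn)
      ((hg.continuous_deriv le_rfl).continuousOn)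
    intro x hx
    exact ne_of_gt (hg'pos x (lt_of_lt_of_le hα hx.1))
  have hmem : α ∈ Set.Icc (h α) (h b) := ⟨(hhlt α hα).le, hb1⟩
  obtain ⟨w₀, hw₀mem, hw₀eq⟩ := intermediate_value_Icc hab hcont hmem
  have hw₀pos : 0 < w₀ := lt_of_lt_of_le hα hw₀mem.1
  have hd₀ := hg'pos w₀ hw₀pos
  set ν₀ : ℝ := 1 / deriv g w₀ with hν₀def
  have hν₀pos : 0 < ν₀ := by positivity
  have hwsν₀ : wstar ν₀ = w₀ := hws w₀ hw₀pos
  have hνg : ν₀ * g w₀ = α := by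
    rw [hν₀def, one_div, inv_mul_eq_div, ← hw₀eq]
  have heq : α + (wstar ν₀ - ν₀ * g (wstar ν₀)) = wstar ν₀ := by
    rw [hwsν₀, hνg]; ring
  -- Universal upper bound U ν ≤ α (C - 1)
  have hub : ∀ ν : ℝ, 0 < ν → U ν ≤ α * (C - 1) := by
    intro ν hν
    obtain ⟨hwnn, hwmax⟩ := hmax ν hν
    have hV0 : (0:ℝ) - ν * g 0 ≤ wstar ν - ν * g (wstar ν) :=
      hwmax (Set.mem_Ici.2 le_rfl)
    rw [h0] at hV0
    have hVnn : 0 ≤ wstar ν - ν * g (wstar ν) := by linarith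
    have hxmem : α + (wstar ν - ν * g (wstar ν)) ∈ Set.Ici (0:ℝ) := by
      simp only [Set.mem_Ici]; linarith
    have hle := hwmax hxmem
    simp only [Set.mem_setOf_eq] at hle
    have : α ≤ ν * g (α + (wstar ν - ν * g (wstar ν))) := by linarith
    rw [hU ν hν]
    nlinarith
  have hUν₀ : U ν₀ = α * (C - 1) := by
    rw [hU ν₀ hν₀pos, heq, hwsν₀, hνg]; ring
  exact ⟨ν₀, hν₀pos, fun ν hν => (hub ν hν).trans_eq hUν₀.symm, hUν₀, heq⟩
end

section
/- Let g be continuously differentiable, strictly convex, strictly log-concave, with g(0)=g'(0)=0 and g'(w)→∞. Fix C > 1, α > 0, and ν in the intermediation regime. Then the derivative with respect to ν of the equilibrium social welfare W(ν) = Cα - ν·g(α + V(ν)) + C·V(ν), where V(ν) = max_{w≥0}(w - ν g(w)), is strictly negative; that is, g(α + V(ν)) + C·g(w*(ν)) > g'(α + V(ν)) · g(w*(ν))/g'(w*(ν)), where w*(ν) is the maximizer of w - ν g(w). -/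
open Filter Topology

/-- In the intermediation regime, the equilibrium social welfare
`W(ν) = Cα - ν·g(α + V(ν)) + C·V(ν)` (with `V(ν) = max_{w≥0}(w - ν g(w))`) is
strictly decreasing in `ν`: its derivative is strictly negative, equivalently
`g(α + V(ν)) + C·g(w*(ν)) > g'(α + V(ν))·g(w*(ν))/g'(w*(ν))`. -/
theorem stmt16 (g : ℝ → ℝ) (hg : ContDiff ℝ 1 g)
    (hsc : StrictConvexOn ℝ (Set.Ici (0 : ℝ)) g)
    (h0 : g 0 = 0) (h0' : deriv g 0 = 0)
    (hg'inf : Tendsto (deriv g) atTop atTop)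
    (hlog : StrictMonoOn (fun w => g w / deriv g w) (Set.Ioi 0))
    (α C : ℝ) (hα : 0 < α) (hC : 1 < C)
    (wstar : ℝ → ℝ)
    (hmax : ∀ ν : ℝ, 0 < ν → 0 ≤ wstar ν ∧
      IsMaxOn (fun x => x - ν * g x) (Set.Ici 0) (wstar ν))
    (huniq : ∀ ν : ℝ, 0 < ν → ∀ w : ℝ, 0 ≤ w →
      IsMaxOn (fun x => x - ν * g x) (Set.Ici 0) w → w = wstar ν)
    (V : ℝ → ℝ) (hV : ∀ ν : ℝ, 0 < ν → V ν = wstar ν - ν * g (wstar ν))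
    (W : ℝ → ℝ)
    (hW : ∀ ν : ℝ, 0 < ν → W ν = C * α - ν * g (α + V ν) + C * V ν)
    (ν : ℝ) (hν : 0 < ν) :
    deriv W ν < 0 ∧
      g (α + V ν) + C * g (wstar ν)
        > deriv g (α + V ν) * g (wstar ν) / deriv g (wstar ν) := by
  have hgd : Differentiable ℝ g := hg.differentiable one_ne_zero
  have hg'c : Continuous (deriv g) := hg.continuous_deriv le_rfl
  have hmono : StrictMonoOn (deriv g) (Set.Ici 0) :=
    hsc.strictMonoOn_deriv (fun x _ => hgd x)
  -- positivity of g and deriv g on (0,∞)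
  have gpos : ∀ x : ℝ, 0 < x → 0 < g x := by
    intro x hx
    have h := hsc.deriv_lt_slope (Set.self_mem_Ici) (Set.mem_Ici.2 hx.le) hx (hgd 0)
    rw [slope_def_field, h0, h0'] at h
    have : 0 < g x / x := by simpa using h
    have := mul_pos this hx
    rwa [div_mul_cancel₀ _ hx.ne'] at this
  have g'pos : ∀ x : ℝ, 0 < x → 0 < deriv g x := by
    intro x hx
    have := hmono Set.self_mem_Ici (Set.mem_Ici.2 hx.le) hx
    rwa [h0'] at this
  -- first order condition
  have foc : ∀ μ : ℝ, 0 < μ → 0 < wstar μ ∧ μ * deriv g (wstar μ) = 1 := by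
    intro μ hμ
    obtain ⟨hw0, hwmax⟩ := hmax μ hμ
    have hne : wstar μ ≠ 0 := by
      intro hzero
      -- derivative of x - μ g x at 0 is 1, so the max cannot be at 0
      have hf : HasDerivAt (fun x => x - μ * g x) 1 0 := by
        have := (hasDerivAt_id (0:ℝ)).sub (((hgd 0).hasDerivAt).const_mul μ)
        simpa [h0', Pi.sub_def] using this
      have hslope := hasDerivAt_iff_tendsto_slope.1 hf
      have hpos : ∀ᶠ x in 𝓝[>] (0:ℝ), 0 < slope (fun x => x - μ * g x) 0 x := by
        have hsub : 𝓝[>] (0:ℝ) ≤ 𝓝[≠] (0:ℝ) :=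
          nhdsWithin_mono 0 (fun x hx => ne_of_gt hx)
        exact (hslope.mono_left hsub).eventually (eventually_gt_nhds one_pos)
      obtain ⟨x, hxs, hx⟩ := (hpos.and self_mem_nhdsWithin).exists
      have hxpos : (0:ℝ) < x := hx
      have : (0:ℝ) < (x - μ * g x - (0 - μ * g 0)) / (x - 0) := by
        have := hxs
        rwa [slope_def_field] at this
      have hfx : 0 < x - μ * g x := by
        have h2 := mul_pos this (by linarith : (0:ℝ) < x - 0)
        rw [div_mul_cancel₀ _ (by linarith : x - (0:ℝ) ≠ 0)] at h2
        simpa [h0] using h2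
      have := hwmax (Set.mem_Ici.2 hxpos.le)
      simp only [hzero, h0] at this
      simp at this
      linarith
    have hwpos : 0 < wstar μ := lt_of_le_of_ne hw0 (Ne.symm hne)
    have hloc : IsLocalMax (fun x => x - μ * g x) (wstar μ) :=
      hwmax.isLocalMax (Ici_mem_nhds hwpos)
    have hfw : HasDerivAt (fun x => x - μ * g x) (1 - μ * deriv g (wstar μ)) (wstar μ) :=
      (hasDerivAt_id _).sub (((hgd _).hasDerivAt).const_mul μ)
    have := hloc.hasDerivAt_eq_zero hfw
    exact ⟨hwpos, by linarith⟩
  obtain ⟨hbpos, hfocν⟩ := foc ν hν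
  set b := wstar ν with hbdef
  have hdb : 0 < deriv g b := g'pos b hbpos
  have hgb : 0 < g b := gpos b hbpos
  -- continuity of wstar at ν
  have hwcont : Tendsto wstar (𝓝 ν) (𝓝 b) := by
    rw [Metric.tendsto_nhds]
    intro ε hε
    set ε' := min ε b with hε'def
    have hε'pos : 0 < ε' := lt_min hε hbpos
    have hε'b : ε' ≤ b := min_le_right _ _
    have hlo : deriv g (b - ε') < deriv g b :=
      hmono (Set.mem_Ici.2 (by linarith)) (Set.mem_Ici.2 hbpos.le) (by linarith)
    have hhi : deriv g b < deriv g (b + ε') :=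
      hmono (Set.mem_Ici.2 hbpos.le) (Set.mem_Ici.2 (by linarith)) (by linarith)
    have hinv : Tendsto (fun μ : ℝ => 1 / μ) (𝓝 ν) (𝓝 (1 / ν)) :=
      (continuousAt_const.div continuousAt_id hν.ne').tendsto
    have hdgb : deriv g b = 1 / ν := by
      field_simp at hfocν ⊢; linarith
    have hev1 : ∀ᶠ μ in 𝓝 ν, deriv g (b - ε') < 1 / μ ∧ 1 / μ < deriv g (b + ε') := by
      have h1 : ∀ᶠ y in 𝓝 (1/ν), deriv g (b - ε') < y ∧ y < deriv g (b + ε') := by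
        have := eventually_gt_nhds (hdgb ▸ hlo)
        have h2 := eventually_lt_nhds (hdgb ▸ hhi)
        exact this.and h2
      exact hinv.eventually h1
    filter_upwards [hev1, eventually_gt_nhds hν] with μ hμ1 hμpos
    obtain ⟨hwμpos, hfocμ⟩ := foc μ hμpos
    have hdgμ : deriv g (wstar μ) = 1 / μ := by
      field_simp at hfocμ ⊢; linarith
    have hl : b - ε' < wstar μ := by
      by_contra h
      push_neg at h
      have := hmono.monotoneOn (Set.mem_Ici.2 hwμpos.le) (Set.mem_Ici.2 (by linarith)) h
      rw [hdgμ] at this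
      linarith [hμ1.1]
    have hr : wstar μ < b + ε' := by
      by_contra h
      push_neg at h
      have := hmono.monotoneOn (Set.mem_Ici.2 (by linarith : (0:ℝ) ≤ b + ε'))
        (Set.mem_Ici.2 hwμpos.le) h
      rw [hdgμ] at this
      linarith [hμ1.2]
    rw [Real.dist_eq, abs_lt]
    have hεε : ε' ≤ ε := min_le_left _ _
    constructor <;> linarith
  -- envelope theorem : V has derivative -g b at ν
  have hgw : Tendsto (fun μ => g (wstar μ)) (𝓝 ν) (𝓝 (g b)) :=
    (hg.continuous.tendsto b).comp hwcont
  have hVd : HasDerivAt V (-(g b)) ν := by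
    rw [hasDerivAt_iff_tendsto_slope]
    have hE : Tendsto (fun μ => |g (wstar μ) - g b|) (𝓝[≠] ν) (𝓝 0) := by
      have : Tendsto (fun μ => |g (wstar μ) - g b|) (𝓝 ν) (𝓝 |g b - g b|) :=
        ((hgw.sub tendsto_const_nhds).abs)
      simpa using this.mono_left nhdsWithin_le_nhds
    have hlow : Tendsto (fun μ => -(g b) - |g (wstar μ) - g b|) (𝓝[≠] ν) (𝓝 (-(g b))) := by
      simpa using (tendsto_const_nhds.sub hE)
    have hup : Tendsto (fun μ => -(g b) + |g (wstar μ) - g b|) (𝓝[≠] ν) (𝓝 (-(g b))) := by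
      simpa using (tendsto_const_nhds.add hE)
    have hboth : ∀ᶠ μ in 𝓝[≠] ν,
        -(g b) - |g (wstar μ) - g b| ≤ slope V ν μ ∧
          slope V ν μ ≤ -(g b) + |g (wstar μ) - g b| := by
      filter_upwards [eventually_nhdsWithin_of_eventually_nhds (eventually_gt_nhds hν),
        self_mem_nhdsWithin] with μ hμpos (hμne : μ ≠ ν)
      obtain ⟨hwμ0, hwμmax⟩ := hmax μ hμpos
      obtain ⟨hwν0, hwνmax⟩ := hmax ν hν
      have key1 : V ν + (ν - μ) * g b ≤ V μ := by
        have h1 : b - μ * g b ≤ wstar μ - μ * g (wstar μ) := hwμmax (Set.mem_Ici.2 hbpos.le)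
        have hVμ : V μ = wstar μ - μ * g (wstar μ) := hV μ hμpos
        have hVν : V ν = b - ν * g b := hV ν hν
        rw [hVμ, hVν]; linarith
      have key2 : V μ ≤ V ν + (ν - μ) * g (wstar μ) := by
        have h1 : wstar μ - ν * g (wstar μ) ≤ b - ν * g b := hwνmax (Set.mem_Ici.2 hwμ0)
        have hVμ : V μ = wstar μ - μ * g (wstar μ) := hV μ hμpos
        have hVν : V ν = b - ν * g b := hV ν hν
        rw [hVμ, hVν]; linarith
      have hsl : slope V ν μ = (V μ - V ν) / (μ - ν) := by rw [slope_def_field]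
      have habs : |slope V ν μ + g b| ≤ |g (wstar μ) - g b| := by
        have hdne : μ - ν ≠ 0 := sub_ne_zero.2 hμne
        have hN1 : 0 ≤ V μ - V ν + (μ - ν) * g b := by linarith
        have hN2 : V μ - V ν + (μ - ν) * g b ≤ (ν - μ) * (g (wstar μ) - g b) := by nlinarith [key2]
        have heq : slope V ν μ + g b = (V μ - V ν + (μ - ν) * g b) / (μ - ν) := by
          rw [hsl]; field_simp
        rw [heq, abs_div]
        rw [div_le_iff₀ (abs_pos.2 hdne)]
        calc |V μ - V ν + (μ - ν) * g b| = V μ - V ν + (μ - ν) * g b := abs_of_nonneg hN1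
          _ ≤ (ν - μ) * (g (wstar μ) - g b) := hN2
          _ ≤ |(ν - μ) * (g (wstar μ) - g b)| := le_abs_self _
          _ = |g (wstar μ) - g b| * |μ - ν| := by rw [abs_mul, abs_sub_comm ν μ, mul_comm]
      have := abs_le.1 habs
      exact ⟨by linarith, by linarith⟩
    exact tendsto_of_tendsto_of_tendsto_of_le_of_le' hlow hup
      (hboth.mono fun μ h => h.1) (hboth.mono fun μ h => h.2)
  -- positivity facts at ν
  have hVν0 : 0 ≤ V ν := by
    have h1 : (0:ℝ) - ν * g 0 ≤ b - ν * g b := (hmax ν hν).2 (Set.self_mem_Ici)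
    have hVν : V ν = b - ν * g b := hV ν hν
    rw [hVν]; rw [h0] at h1; linarith
  set a := α + V ν with hadef
  have hapos : 0 < a := by positivity
  have hga : 0 < g a := gpos a hapos
  have hda : 0 < deriv g a := g'pos a hapos
  -- the key inequality (second conjunct)
  have hineq : g a + C * g b > deriv g a * g b / deriv g b := by
    rcases lt_trichotomy a b with hab | hab | hab
    · have hdlt : deriv g a < deriv g b :=
        hmono (Set.mem_Ici.2 hapos.le) (Set.mem_Ici.2 hbpos.le) hab
      have h1 : deriv g a * g b / deriv g b < g b := by
        rw [div_lt_iff₀ hdb]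
        nlinarith
      nlinarith
    · rw [hab]
      have : deriv g b * g b / deriv g b = g b := by field_simp
      rw [this]
      nlinarith
    · have := hlog (Set.mem_Ioi.2 hbpos) (Set.mem_Ioi.2 hapos) hab
      simp only at this
      have h1 : deriv g a * g b / deriv g b < g a := by
        rw [div_lt_iff₀ hdb]
        rw [div_lt_div_iff₀ hdb hda] at this
        nlinarith
      nlinarith
  refine ⟨?_, hineq⟩
  -- compute deriv W
  have hAV : HasDerivAt (fun μ => g (α + V μ)) (deriv g a * (-(g b))) ν := by
    have h1 : HasDerivAt (fun μ => α + V μ) (-(g b)) ν := by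
      simpa [Pi.add_def] using (hasDerivAt_const ν α).add hVd
    exact ((hgd a).hasDerivAt).comp ν h1
  have hWd : HasDerivAt W
      (-(1 * g a + ν * (deriv g a * (-(g b)))) + C * (-(g b))) ν := by
    have h2 : HasDerivAt (fun μ => C * α - μ * g (α + V μ) + C * V μ)
        (-(1 * g a + ν * (deriv g a * (-(g b)))) + C * (-(g b))) ν := by
      have hm : HasDerivAt (fun μ => μ * g (α + V μ))
          (1 * g a + ν * (deriv g a * (-(g b)))) ν :=
        (hasDerivAt_id ν).mul hAV
      have := ((hasDerivAt_const ν (C * α)).sub hm).add (hVd.const_mul C)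
      have heq : -(g b) * C = C * (-(g b)) := by ring
      simpa [sub_eq_add_neg, mul_comm, Pi.add_def, Pi.neg_def] using this
    have hEq : W =ᶠ[𝓝 ν] fun μ => C * α - μ * g (α + V μ) + C * V μ := by
      filter_upwards [eventually_gt_nhds hν] with μ hμpos
      exact hW μ hμpos
    exact h2.congr_of_eventuallyEq hEq
  rw [hWd.deriv]
  have hνeq : ν * (deriv g a * g b) = deriv g a * g b / deriv g b := by
    rw [eq_div_iff hdb.ne']
    linear_combination (deriv g a * g b) * hfocν
  nlinarith [hineq, hνeq]
end

section
/- Let g(w) = w^β with β ≥ 2, fix α > 0 and C ≥ 1. Define ν_bliss by ν_bliss^{-1/(β-1)} = α / ((C^{1/(β-1)} - 1)·β^{-1/(β-1)} + β^{-β/(β-1)}). Then at ν = ν_bliss, the quality α + max_{w≥0}(w - ν g(w)) equals argmax_{w≥0}(C·w - ν·g(w)), and moreover ν_bliss · g(α + max_{w≥0}(w - ν_bliss g(w))) ≤ αC; the latter inequality reduces (after algebraic simplification) to C ≥ 1. -/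
open Real

/-- Tangent line inequality for `x ^ β` at `y`. -/
lemma tangent_rpow {β x y : ℝ} (hβ : 1 ≤ β) (hx : 0 ≤ x) (hy : 0 < y) :
    y ^ β + β * y ^ (β - 1) * (x - y) ≤ x ^ β := by
  have hs : -1 ≤ x / y - 1 := by
    have : 0 ≤ x / y := div_nonneg hx hy.le
    linarith
  have h := one_add_mul_self_le_rpow_one_add hs hβ
  rw [show (1 : ℝ) + (x / y - 1) = x / y by ring,
    Real.div_rpow hx hy.le] at h
  have hyβ : (0 : ℝ) < y ^ β := Real.rpow_pos_of_pos hy β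
  have h2 : (1 + β * (x / y - 1)) * y ^ β ≤ x ^ β := (le_div_iff₀ hyβ).mp h
  have hsplit : y ^ β = y ^ (β - 1) * y :=
    calc y ^ β = y ^ (β - 1 + 1) := by norm_num
      _ = y ^ (β - 1) * y ^ (1 : ℝ) := Real.rpow_add hy _ _
      _ = y ^ (β - 1) * y := by rw [Real.rpow_one]
  have hyne : y ≠ 0 := hy.ne'
  have key : (1 + β * (x / y - 1)) * y ^ β = y ^ β + β * y ^ (β - 1) * (x - y) := by
    rw [hsplit]; field_simp
  linarith [key ▸ h2]

/-- The maximizer of `c*w - ν*w^β` on `[0, ∞)`. -/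
lemma isMaxOn_power (β ν c : ℝ) (hβ : 1 < β) (hν : 0 < ν) (hc : 0 < c) :
    IsMaxOn (fun w : ℝ => c * w - ν * w ^ β) (Set.Ici 0)
      ((c / (ν * β)) ^ (1 / (β - 1))) := by
  have hβ0 : (0 : ℝ) < β := by linarith
  set W := (c / (ν * β)) ^ (1 / (β - 1)) with hWdef
  have hq : (0 : ℝ) < c / (ν * β) := div_pos hc (mul_pos hν hβ0)
  have hW0 : 0 < W := Real.rpow_pos_of_pos hq _
  have hkey : ν * β * W ^ (β - 1) = c := by
    have h1 : W ^ (β - 1) = c / (ν * β) := by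
      rw [hWdef, ← Real.rpow_mul hq.le, one_div,
        inv_mul_cancel₀ (by linarith : β - 1 ≠ 0), Real.rpow_one]
    rw [h1]
    field_simp
  rw [isMaxOn_iff]
  intro x hx
  have ht := tangent_rpow hβ.le (Set.mem_Ici.mp hx) hW0
  have h2 : ν * W ^ β + c * (x - W) ≤ ν * x ^ β := by
    calc ν * W ^ β + c * (x - W)
        = ν * (W ^ β + β * W ^ (β - 1) * (x - W)) := by rw [← hkey]; ring
      _ ≤ ν * x ^ β := by
          exact mul_le_mul_of_nonneg_left ht hν.le
  show c * x - ν * x ^ β ≤ c * W - ν * W ^ β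
  linarith

/-- Bliss point for power cost functions `g(w) = w^β`, `β ≥ 2`: at the cost level
`ν` defined by `ν^{-1/(β-1)} = α/((C^{1/(β-1)} - 1)β^{-1/(β-1)} + β^{-β/(β-1)})`,
the quality `α + max_{w≥0}(w - ν w^β)` equals `argmax_{w≥0}(C·w - ν w^β)`, and
`ν·(α + max_{w≥0}(w - ν w^β))^β ≤ αC`. -/
theorem stmt17 (β α C ν : ℝ) (hβ : 2 ≤ β) (hα : 0 < α) (hC : 1 ≤ C) (hν0 : 0 < ν)
    (hν : ν ^ (-(1 / (β - 1))) =
      α / ((C ^ (1 / (β - 1)) - 1) * β ^ (-(1 / (β - 1))) + β ^ (-(β / (β - 1)))))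
    (V : ℝ) (hV : IsGreatest ((fun w : ℝ => w - ν * w ^ β) '' Set.Ici 0) V) :
    IsMaxOn (fun w : ℝ => C * w - ν * w ^ β) (Set.Ici 0) (α + V) ∧
      ν * (α + V) ^ β ≤ α * C := by
  have hβ1 : (1 : ℝ) < β := by linarith
  have hβ0 : (0 : ℝ) < β := by linarith
  have hβe : (0 : ℝ) < β - 1 := by linarith
  have hC0 : (0 : ℝ) < C := by linarith
  set t := ν ^ (-(1 / (β - 1))) with htdef
  set a := β ^ (-(1 / (β - 1))) with hadef
  set b := β ^ (-(β / (β - 1))) with hbdef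
  set c' := C ^ (1 / (β - 1)) with hcdef
  have ht0 : 0 < t := Real.rpow_pos_of_pos hν0 _
  have ha0 : 0 < a := Real.rpow_pos_of_pos hβ0 _
  have hb0 : 0 < b := Real.rpow_pos_of_pos hβ0 _
  have hc1 : 1 ≤ c' := Real.one_le_rpow hC (by positivity)
  have hba : b ≤ a := by
    rw [hbdef, hadef, Real.rpow_le_rpow_left_iff hβ1]
    have h1 : 1 / (β - 1) ≤ β / (β - 1) := by
      gcongr <;> linarith
    linarith
  -- α = t * D
  have hD0 : 0 < (c' - 1) * a + b := by nlinarith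
  have hαD : α = t * ((c' - 1) * a + b) := by
    rw [hν]
    field_simp
  -- W1 := (1/(ν*β))^(1/(β-1)) = t * a
  have hW1 : (1 / (ν * β)) ^ (1 / (β - 1)) = t * a := by
    rw [one_div, Real.inv_rpow (mul_pos hν0 hβ0).le,
      Real.mul_rpow hν0.le hβ0.le, mul_inv, ← Real.rpow_neg hν0.le,
      ← Real.rpow_neg hβ0.le]
  -- ν * (t*a)^β = t * b
  have htβ : ν * t ^ β = t := by
    rw [htdef, ← Real.rpow_mul hν0.le]
    nth_rewrite 1 [← Real.rpow_one ν]
    rw [← Real.rpow_add hν0]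
    congr 1
    field_simp
    ring
  have haβ : a ^ β = b := by
    rw [hadef, hbdef, ← Real.rpow_mul hβ0.le]
    congr 1
    ring
  have hνta : ν * (t * a) ^ β = t * b := by
    rw [Real.mul_rpow ht0.le ha0.le, haβ]
    calc ν * (t ^ β * b) = (ν * t ^ β) * b := by ring
      _ = t * b := by rw [htβ]
  -- WC := (C/(ν*β))^(1/(β-1)) = c' * (t * a)
  have hWC : (C / (ν * β)) ^ (1 / (β - 1)) = c' * (t * a) := by
    rw [show C / (ν * β) = C * (1 / (ν * β)) by ring,
      Real.mul_rpow hC0.le (by positivity), hW1, hcdef]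
  -- V = t*a - t*b
  have hW1pos : (0 : ℝ) < t * a := mul_pos ht0 ha0
  have hG : IsGreatest ((fun w : ℝ => w - ν * w ^ β) '' Set.Ici 0)
      (t * a - ν * (t * a) ^ β) := by
    constructor
    · exact ⟨t * a, Set.mem_Ici.mpr hW1pos.le, rfl⟩
    · rintro y ⟨x, hx, rfl⟩
      have h := isMaxOn_iff.mp (isMaxOn_power β ν 1 hβ1 hν0 one_pos) x hx
      simp only [one_mul] at h
      rw [hW1] at h
      simpa using h
  have hVv : V = t * a - t * b := by
    rw [hV.unique hG, hνta]
  have hsum : α + V = c' * (t * a) := by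
    rw [hVv, hαD]; ring
  constructor
  · rw [hsum, ← hWC]
    exact isMaxOn_power β ν C hβ1 hν0 hC0
  · rw [hsum]
    have hc'β : c' ^ β = C * c' := by
      rw [hcdef, ← Real.rpow_mul hC0.le]
      nth_rewrite 2 [← Real.rpow_one C]
      rw [← Real.rpow_add hC0]
      congr 1
      field_simp
      ring
    have hLHS : ν * (c' * (t * a)) ^ β = C * c' * (t * b) := by
      rw [Real.mul_rpow (by positivity) hW1pos.le]
      calc ν * (c' ^ β * (t * a) ^ β) = c' ^ β * (ν * (t * a) ^ β) := by ring
        _ = c' ^ β * (t * b) := by rw [hνta]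
        _ = C * c' * (t * b) := by rw [hc'β]
    rw [hLHS, hαD]
    have key : (c' - 1) * b ≤ (c' - 1) * a :=
      mul_le_mul_of_nonneg_left hba (by linarith)
    nlinarith [mul_le_mul_of_nonneg_left key (mul_pos ht0 hC0).le]
end

section
/- Fix β > 1, α ∈ (0,1), and C > 1. An intermediary charging a linear fee α·w' survives the market (i.e., there exists w' ≥ 0 such that both w' ≥ (1-α)^{-1}·max_{w≥0}(w - ν·w^β) and α·w'·C - ν·(w')^β ≥ 0) if and only if α^{1/(β-1)}·(1-α) ≥ C^{-1/(β-1)}·(β^{-1/(β-1)} - β^{-β/(β-1)}). In particular this condition is independent of ν > 0. -/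
open Real

private lemma young_aux (β ν : ℝ) (hβ : 1 < β) (hν : 0 < ν) (w : ℝ) (hw : 0 ≤ w) :
    w - ν * w ^ β ≤ (ν * β) ^ (-(1/(β-1))) * (1 - 1/β) := by
  have hβ0 : 0 < β := by linarith
  have hβ1 : 0 < β - 1 := by linarith
  have hνβ : 0 < ν * β := by positivity
  have hpq : β.HolderConjugate (β/(β-1)) := by
    exact (Real.holderConjugate_iff_eq_conjExponent hβ).2 rfl
  have hy := Real.young_inequality_of_nonneg
    (a := w * (ν*β) ^ (1/β)) (b := (ν*β) ^ (-(1/β)))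
    (by positivity) (by positivity) hpq
  have e1 : w * (ν*β) ^ (1/β) * (ν*β) ^ (-(1/β)) = w := by
    rw [mul_assoc, ← Real.rpow_add hνβ]
    simp
  have e2 : (w * (ν*β) ^ (1/β)) ^ β / β = ν * w ^ β := by
    rw [Real.mul_rpow hw (by positivity), ← Real.rpow_mul (le_of_lt hνβ),
      one_div, inv_mul_cancel₀ (ne_of_gt hβ0), Real.rpow_one]
    field_simp
  have e3 : ((ν*β) ^ (-(1/β))) ^ (β/(β-1)) / (β/(β-1)) = (ν * β) ^ (-(1/(β-1))) * (1 - 1/β) := by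
    rw [← Real.rpow_mul (le_of_lt hνβ)]
    have h1 : -(1/β) * (β/(β-1)) = -(1/(β-1)) := by field_simp
    have h2 : (β/(β-1))⁻¹ = 1 - 1/β := by field_simp
    rw [h1, div_eq_mul_inv, h2]
  rw [e1, e2, e3] at hy
  linarith

/-- With linear fees `α·w'`, the intermediary survives (there exists a quality
`w' ≥ 0` that both retains consumers and is profitable) if and only if
`α^{1/(β-1)}(1-α) ≥ C^{-1/(β-1)}(β^{-1/(β-1)} - β^{-β/(β-1)})`; in particular the
condition is independent of the production cost `ν`. -/
theorem stmt18 (β α C ν : ℝ) (hβ : 1 < β) (hα0 : 0 < α) (hα1 : α < 1)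
    (hC : 1 < C) (hν : 0 < ν)
    (V : ℝ) (hV : IsGreatest ((fun w : ℝ => w - ν * w ^ β) '' Set.Ici 0) V) :
    (∃ w' : ℝ, 0 ≤ w' ∧ (1 - α)⁻¹ * V ≤ w' ∧ 0 ≤ α * w' * C - ν * w' ^ β) ↔
      C ^ (-(1 / (β - 1))) * (β ^ (-(1 / (β - 1))) - β ^ (-(β / (β - 1))))
        ≤ α ^ (1 / (β - 1)) * (1 - α) := by
  have hβ0 : 0 < β := by linarith
  have hβ1 : 0 < β - 1 := by linarith
  set q : ℝ := 1/(β-1) with hqdef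
  have hq : 0 < q := by positivity
  have hνβ : 0 < ν * β := by positivity
  have hα1' : 0 < 1 - α := by linarith
  have hC0 : 0 < C := by linarith
  set N : ℝ := ν ^ (-q) with hNdef
  have hN : 0 < N := Real.rpow_pos_of_pos hν _
  have hβinv : 1/β < 1 := by rw [div_lt_one hβ0]; exact hβ
  -- exponent arithmetic
  have hqβ : -q * β = -q + -1 := by
    rw [hqdef]; field_simp; ring
  have hq1 : q * (β - 1) = 1 := by rw [hqdef]; field_simp
  -- value of V
  have hw_pow : ((ν*β) ^ (-q)) ^ β = (ν*β) ^ (-q) * (ν*β)⁻¹ := by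
    rw [← Real.rpow_mul hνβ.le, hqβ, Real.rpow_add hνβ, Real.rpow_neg_one]
  have hVstar : (ν*β) ^ (-q) - ν * ((ν*β) ^ (-q)) ^ β = (ν * β) ^ (-q) * (1 - 1/β) := by
    rw [hw_pow]
    field_simp
  have hVeq : V = (ν * β) ^ (-q) * (1 - 1/β) := by
    apply le_antisymm
    · obtain ⟨w0, hw0, hfw0⟩ := hV.1
      rw [← hfw0]
      exact young_aux β ν hβ hν w0 hw0
    · rw [← hVstar]
      exact hV.2 ⟨(ν*β) ^ (-q), Set.mem_Ici.mpr (by positivity), rfl⟩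
  have hVeq' : V = (β ^ (-q) * (1 - 1/β)) * N := by
    rw [hVeq, hNdef, Real.mul_rpow hν.le hβ0.le]; ring
  have hVpos : 0 < V := by
    rw [hVeq']
    exact mul_pos (mul_pos (Real.rpow_pos_of_pos hβ0 _) (by linarith)) hN
  -- the difference in the target
  have hD : β ^ (-q) - β ^ (-(β/(β-1))) = β ^ (-q) * (1 - 1/β) := by
    have h1 : -(β/(β-1)) = -q + -1 := by rw [hqdef]; field_simp; ring
    rw [h1, Real.rpow_add hβ0, Real.rpow_neg_one]
    ring
  -- expression for the profitability threshold
  set K : ℝ := (α*C/ν) ^ q with hKdef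
  have hKpos : 0 < K := Real.rpow_pos_of_pos (by positivity) _
  have hKeq : K = α ^ q * C ^ q * N := by
    rw [hKdef, hNdef, Real.div_rpow (by positivity) hν.le,
      Real.mul_rpow hα0.le hC0.le, Real.rpow_neg hν.le, div_eq_mul_inv]
  -- the key equivalence
  have hkey : ((1-α)⁻¹ * V ≤ K) ↔
      (C ^ (-q) * (β ^ (-q) - β ^ (-(β/(β-1)))) ≤ α ^ q * (1-α)) := by
    rw [hD, hVeq', hKeq, Real.rpow_neg hC0.le,
      inv_mul_le_iff₀ hα1', inv_mul_le_iff₀ (Real.rpow_pos_of_pos hC0 q),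
      show (1-α) * (α ^ q * C ^ q * N) = (C ^ q * (α ^ q * (1-α))) * N from by ring]
    exact mul_le_mul_iff_of_pos_right hN
  constructor
  · rintro ⟨w', hw'0, h1, h2⟩
    have hw'pos : 0 < w' := lt_of_lt_of_le (by positivity) h1
    have hwβ : w' ^ β = w' ^ (β-1) * w' := by
      rw [← Real.rpow_add_one hw'pos.ne', sub_add_cancel]
    rw [hwβ] at h2
    have h3 : w' ^ (β-1) ≤ α*C/ν := by
      rw [le_div_iff₀ hν]
      have hcancel : w' ^ (β-1) * ν * w' ≤ α * C * w' := by nlinarith [h2]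
      exact (mul_le_mul_iff_of_pos_right hw'pos).mp hcancel
    have h4 : w' ≤ K := by
      have h5 := Real.rpow_le_rpow (Real.rpow_nonneg hw'0 _) h3 hq.le
      rwa [← Real.rpow_mul hw'0, show (β-1) * q = 1 from by rw [mul_comm]; exact hq1,
        Real.rpow_one] at h5
    exact hkey.mp (h1.trans h4)
  · intro h
    refine ⟨K, hKpos.le, hkey.mpr h, ?_⟩
    have hK1 : K ^ (β-1) = α*C/ν := by
      rw [hKdef, ← Real.rpow_mul (by positivity), hq1, Real.rpow_one]
    have hKβ : K ^ β = (α*C/ν) * K := by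
      rw [show β = (β-1) + 1 from by ring, Real.rpow_add_one hKpos.ne', hK1]
    rw [hKβ]
    have : ν * ((α*C/ν) * K) = α * K * C := by field_simp
    linarith
end
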